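/- arXiv:2202.10825 — 6 statements merged into one kernel-verified Lean document; each statement's English description precedes it below -/
import Mathlib

section
/- Let h > 0, N a positive integer, μ ∈ ℝ, and c = e^μ h / (8(N+1)^2). Then the function V(y) = μ − 2 log(1 + c |y^{N+1} − e₁|^2), where y is identified with a complex number and e₁ = 1 ∈ ℂ, satisfies ΔV + h |y|^{2N} e^V = 0 on ℝ². -/
/-- The Laplacian of `f : ℂ → ℝ`, with `ℂ ≅ ℝ²`. -/
noncomputable def lap (f : ℂ → ℝ) (z : ℂ) : ℝ :=
  fderiv ℝ (fun w => fderiv ℝ f w 1) z 1 +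
  fderiv ℝ (fun w => fderiv ℝ f w Complex.I) z Complex.I

lemma hre' (f : ℂ → ℂ) (f' w : ℂ) (hf : HasDerivAt f f' w) :
    HasFDerivAt (fun w => (f w).re)
      (Complex.reCLM.comp (((1 : ℂ →L[ℂ] ℂ).smulRight f').restrictScalars ℝ)) w :=
  Complex.reCLM.hasFDerivAt.comp w (hf.hasFDerivAt.restrictScalars ℝ)

lemma him' (f : ℂ → ℂ) (f' w : ℂ) (hf : HasDerivAt f f' w) :
    HasFDerivAt (fun w => (f w).im)
      (Complex.imCLM.comp (((1 : ℂ →L[ℂ] ℂ).smulRight f').restrictScalars ℝ)) w :=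
  Complex.imCLM.hasFDerivAt.comp w (hf.hasFDerivAt.restrictScalars ℝ)

set_option maxHeartbeats 1000000 in
lemma Rapp (f' v : ℂ) :
    (Complex.reCLM.comp (((1 : ℂ →L[ℂ] ℂ).smulRight f').restrictScalars ℝ)) v = (f' * v).re := by
  simp [mul_comm]

lemma Iapp (f' v : ℂ) :
    (Complex.imCLM.comp (((1 : ℂ →L[ℂ] ℂ).smulRight f').restrictScalars ℝ)) v = (f' * v).im := by
  simp [mul_comm]

theorem stmt2 (h : ℝ) (hh : 0 < h) (N : ℕ) (hN : 0 < N) (μ : ℝ)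
    (c : ℝ) (hc : c = Real.exp μ * h / (8 * (N + 1) ^ 2))
    (V : ℂ → ℝ)
    (hV : V = fun y => μ - 2 * Real.log (1 + c * ‖y ^ (N + 1) - 1‖ ^ 2)) :
    ∀ y : ℂ, lap V y + h * ‖y‖ ^ (2 * N) * Real.exp (V y) = 0 := by
  intro z
  have hcpos : 0 < c := by
    rw [hc]; positivity
  set q : ℂ → ℂ := fun w => w ^ (N+1) - 1 with hqdef
  set p : ℂ → ℂ := fun w => ((N:ℂ)+1) * w ^ N with hpdef
  set p' : ℂ → ℂ := fun w => ((N:ℂ)+1) * ((N:ℂ) * w ^ (N-1)) with hp'def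
  have hVg : V = fun w => μ - 2 * Real.log (1 + c * ((q w).re * (q w).re + (q w).im * (q w).im)) := by
    rw [hV]; funext w
    rw [Complex.sq_norm, Complex.normSq_apply]
  have hq : ∀ w : ℂ, HasDerivAt q (p w) w := fun w => by
    simpa [hpdef, hqdef] using (hasDerivAt_pow (N+1) w).sub_const 1
  have hp : ∀ w : ℂ, HasDerivAt p (p' w) w := fun w =>
    (hasDerivAt_pow N w).const_mul _
  have hG : ∀ w : ℂ, 0 < 1 + c * ((q w).re * (q w).re + (q w).im * (q w).im) := by
    intro w
    nlinarith [sq_nonneg ((q w).re), sq_nonneg ((q w).im), hcpos]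
  have hGd := fun w : ℂ =>
    ((((hre' q (p w) w (hq w)).mul (hre' q (p w) w (hq w))).add
        ((him' q (p w) w (hq w)).mul (him' q (p w) w (hq w)))).const_mul c).const_add 1
  have key : ∀ (w v : ℂ), fderiv ℝ V w v =
      (-4*c) * ((q w).re * (p w * v).re + (q w).im * (p w * v).im) /
        (1 + c * ((q w).re * (q w).re + (q w).im * (q w).im)) := by
    intro w v
    have H := (((hGd w).log (hG w).ne').const_mul (2:ℝ)).const_sub μ
    rw [hVg, (H.congr_of_eventuallyEq (Filter.Eventually.of_forall fun w => rfl) :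
      HasFDerivAt (fun w => μ - 2 * Real.log (1 + c * ((q w).re * (q w).re + (q w).im * (q w).im))) _ w).fderiv]
    simp
    ring
  -- the two first-derivative functions
  have hA : (fun w => fderiv ℝ V w 1) =
      fun w => (-4*c) * ((q w).re * (p w).re + (q w).im * (p w).im) *
        (1 + c * ((q w).re * (q w).re + (q w).im * (q w).im))⁻¹ := by
    funext w; rw [key, div_eq_mul_inv, mul_one]
  have hB : (fun w => fderiv ℝ V w Complex.I) =
      fun w => (-4*c) * ((q w).im * (p w).re - (q w).re * (p w).im) *
        (1 + c * ((q w).re * (q w).re + (q w).im * (q w).im))⁻¹ := by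
    funext w; rw [key, div_eq_mul_inv]
    simp only [Complex.mul_I_re, Complex.mul_I_im]; ring
  -- second derivatives
  have Hinv := (hasFDerivAt_inv (hG z).ne').comp z (hGd z)
  have HA := ((((hre' q (p z) z (hq z)).mul (hre' p (p' z) z (hp z))).add
        ((him' q (p z) z (hq z)).mul (him' p (p' z) z (hp z)))).const_mul (-4*c)).mul Hinv
  have HB := ((((him' q (p z) z (hq z)).mul (hre' p (p' z) z (hp z))).sub
        ((hre' q (p z) z (hq z)).mul (him' p (p' z) z (hp z)))).const_mul (-4*c)).mul Hinv
  set a := (q z).re with ha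
  set b := (q z).im with hb
  set r := (p z).re with hr
  set i := (p z).im with hi
  set r2 := (p' z).re with hr2
  set i2 := (p' z).im with hi2
  obtain ⟨Gz, hGzdef⟩ : ∃ t : ℝ, t = 1 + c * (a * a + b * b) := ⟨_, rfl⟩
  have HA' : HasFDerivAt (fun w => (-4*c) * ((q w).re * (p w).re + (q w).im * (p w).im) *
      (1 + c * ((q w).re * (q w).re + (q w).im * (q w).im))⁻¹) _ z :=
    HA.congr_of_eventuallyEq (Filter.Eventually.of_forall fun w => rfl)
  have HB' : HasFDerivAt (fun w => (-4*c) * ((q w).im * (p w).re - (q w).re * (p w).im) *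
      (1 + c * ((q w).re * (q w).re + (q w).im * (q w).im))⁻¹) _ z :=
    HB.congr_of_eventuallyEq (Filter.Eventually.of_forall fun w => rfl)
  have e1 : fderiv ℝ (fun w => fderiv ℝ V w 1) z 1 =
      (-4*c) * (r*r + i*i + a*r2 + b*i2) * Gz⁻¹
        + 8*c^2*(a*r + b*i)^2 * (Gz⁻¹)^2 := by
    rw [hA, HA'.fderiv]
    simp only [ContinuousLinearMap.add_apply, ContinuousLinearMap.sub_apply,
      ContinuousLinearMap.smul_apply, ContinuousLinearMap.coe_comp', Function.comp_apply,
      Rapp, Iapp, ContinuousLinearMap.smulRight_apply, ContinuousLinearMap.one_apply,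
      smul_eq_mul, mul_one, Complex.mul_I_re, Complex.mul_I_im, Pi.add_apply, Pi.mul_apply, Pi.sub_apply,
      ContinuousLinearMap.toSpanSingleton_apply]
    simp only [← ha, ← hb, ← hr, ← hi, ← hr2, ← hi2, ← hGzdef]
    ring
  have e2 : fderiv ℝ (fun w => fderiv ℝ V w Complex.I) z Complex.I =
      (-4*c) * (r*r + i*i - a*r2 - b*i2) * Gz⁻¹
        + 8*c^2*(b*r - a*i)^2 * (Gz⁻¹)^2 := by
    rw [hB, HB'.fderiv]
    simp only [ContinuousLinearMap.add_apply, ContinuousLinearMap.sub_apply,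
      ContinuousLinearMap.smul_apply, ContinuousLinearMap.coe_comp', Function.comp_apply,
      Rapp, Iapp, ContinuousLinearMap.smulRight_apply, ContinuousLinearMap.one_apply,
      smul_eq_mul, mul_one, Complex.mul_I_re, Complex.mul_I_im, Pi.add_apply, Pi.mul_apply, Pi.sub_apply,
      ContinuousLinearMap.toSpanSingleton_apply]
    simp only [← ha, ← hb, ← hr, ← hi, ← hr2, ← hi2, ← hGzdef]
    ring
  -- value of exp (V z)
  have hGzpos : 0 < Gz := by rw [hGzdef]; exact hG z
  have eV : Real.exp (V z) = Real.exp μ / Gz^2 := by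
    rw [hVg]
    simp only [← ha, ← hb, ← hGzdef]
    rw [show (2:ℝ) * Real.log Gz = Real.log (Gz^2) by
      rw [Real.log_pow]; push_cast; ring]
    rw [Real.exp_sub, Real.exp_log (pow_pos hGzpos 2)]
  -- norms
  have hrr : r*r + i*i = ((N:ℝ)+1)^2 * ((z.re*z.re + z.im*z.im))^N := by
    have h1 : r*r + i*i = Complex.normSq (p z) := (Complex.normSq_apply _).symm
    have h2 : Complex.normSq (((N:ℂ)+1) * z ^ N) =
        ((N:ℝ)+1)^2 * ((z.re*z.re + z.im*z.im))^N := by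
      rw [Complex.normSq_mul, map_pow,
        show Complex.normSq ((N:ℂ)+1) = ((N:ℝ)+1)^2 from by
          rw [Complex.normSq_apply]
          simp [Complex.add_re, Complex.add_im, Complex.natCast_re, Complex.natCast_im]
          ring,
        Complex.normSq_apply]
    rw [h1]; exact h2
  have habs : ‖z‖ ^ (2*N) = (z.re*z.re + z.im*z.im)^N := by
    rw [pow_mul, Complex.sq_norm, Complex.normSq_apply]
  -- assemble
  clear hGd key hA hB Hinv HA HB HA' HB' hVg hV
  rw [lap, e1, e2, eV, habs]
  have hGzne : Gz ≠ 0 := hGzpos.ne'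
  have hc' : 8 * c * ((N:ℝ)+1)^2 = Real.exp μ * h := by
    have hN1 : ((N:ℝ)+1)^2 ≠ 0 := by positivity
    rw [hc]; field_simp
  field_simp
  linear_combination (-8*c*(r*r+i*i)) * hGzdef + (-8*c) * hrr
    + (-(z.re*z.re+z.im*z.im)^N) * hc'
end

section
/- Let h > 0, N a positive integer, μ ∈ ℝ, and V(y) = μ − 2 log(1 + (e^μ h/(8(N+1)^2)) |y^{N+1} − 1|^2) for y ∈ ℂ. Then ∫_{ℝ²} |y|^{2N} e^{V(y)} dy = 8π(N+1)/h. -/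
open MeasureTheory Set Real Function
open scoped ENNReal

noncomputable section

lemma lintegral_comp_polarCoord_symm' (g : ℝ × ℝ → ℝ≥0∞) :
    ∫⁻ p in polarCoord.target, ENNReal.ofReal p.1 * g (polarCoord.symm p) = ∫⁻ p, g p := by
  set B : ℝ × ℝ → (ℝ × ℝ) →L[ℝ] (ℝ × ℝ) := fun p =>
    LinearMap.toContinuousLinearMap (Matrix.toLin (Module.Basis.finTwoProd ℝ) (Module.Basis.finTwoProd ℝ)
      !![Real.cos p.2, -p.1 * Real.sin p.2; Real.sin p.2, p.1 * Real.cos p.2]) with hB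
  have A : ∀ p ∈ polarCoord.target, HasFDerivWithinAt polarCoord.symm (B p) polarCoord.target p :=
    fun p _ => (hasFDerivAt_polarCoord_symm p).hasFDerivWithinAt
  have B_det : ∀ p, (B p).det = p.1 := by
    intro p
    conv_rhs => rw [← one_mul p.1, ← cos_sq_add_sin_sq p.2]
    simp only [hB, neg_mul, LinearMap.det_toContinuousLinearMap, LinearMap.det_toLin,
      Matrix.det_fin_two_of, sub_neg_eq_add]
    ring
  symm
  calc ∫⁻ p, g p = ∫⁻ p in polarCoord.source, g p := by
        rw [← setLIntegral_univ]
        exact (setLIntegral_congr polarCoord_source_ae_eq_univ.symm)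
    _ = ∫⁻ p in polarCoord.symm '' polarCoord.target, g p := by
        rw [polarCoord.symm_image_target_eq_source]
    _ = ∫⁻ p in polarCoord.target, ENNReal.ofReal |(B p).det| * g (polarCoord.symm p) :=
        lintegral_image_eq_lintegral_abs_det_fderiv_mul volume
          polarCoord.open_target.measurableSet A polarCoord.symm.injOn g
    _ = ∫⁻ p in polarCoord.target, ENNReal.ofReal p.1 * g (polarCoord.symm p) := by
        refine setLIntegral_congr_fun polarCoord.open_target.measurableSet
          (fun p hp => ?_)
        rw [B_det, abs_of_pos hp.1]

lemma Complex.lintegral_comp_polarCoord_symm' (g : ℂ → ℝ≥0∞) (hg : Measurable g) :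
    ∫⁻ p in polarCoord.target, ENNReal.ofReal p.1 * g (Complex.polarCoord.symm p) = ∫⁻ z, g z := by
  rw [← (Complex.volume_preserving_equiv_real_prod.symm).lintegral_comp hg,
      ← _root_.lintegral_comp_polarCoord_symm' (fun p : ℝ × ℝ => g (Complex.measurableEquivRealProd.symm p))]
  rfl


lemma ltrans (W : ℝ → ℝ≥0∞) (hW : Measurable W) (t : ℝ) (s : Set ℝ) (hs : MeasurableSet s) :
    ∫⁻ x in (· + t) ⁻¹' s, W (x + t) = ∫⁻ x in s, W x :=
  (measurePreserving_add_right volume t).setLIntegral_comp_preimage hs hW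

lemma lscale (W : ℝ → ℝ≥0∞) (hW : Measurable W) {a : ℝ} (ha : 0 < a) (s : Set ℝ)
    (hs : MeasurableSet s) :
    ∫⁻ x in (a * ·) ⁻¹' s, W (a * x) = ENNReal.ofReal a⁻¹ * ∫⁻ x in s, W x := by
  have h1 : ∫⁻ x in (a * ·) ⁻¹' s, W (a * x) = ∫⁻ y in s, W y ∂(Measure.map (a * ·) volume) :=
    (setLIntegral_map hs hW (measurable_const_mul a)).symm
  rw [h1, Real.map_volume_mul_left ha.ne', Measure.restrict_smul, lintegral_smul_measure,
    abs_of_pos (inv_pos.mpr ha), smul_eq_mul]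

lemma lshift (W : ℝ → ℝ≥0∞) (hW : Measurable W) (t a b : ℝ) :
    ∫⁻ x in Ico (a + t) (b + t), W x = ∫⁻ x in Ico a b, W (x + t) := by
  have hpre : (· + t) ⁻¹' Ico (a + t) (b + t) = Ico a b := by
    rw [Set.preimage_add_const_Ico]; simp
  rw [← ltrans W hW t (Ico (a + t) (b + t)) measurableSet_Ico, hpre]

lemma lsplit (W : ℝ → ℝ≥0∞) {x y z : ℝ} (hxy : x ≤ y) (hyz : y ≤ z) :
    ∫⁻ t in Ico x z, W t = (∫⁻ t in Ico x y, W t) + ∫⁻ t in Ico y z, W t := by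
  rw [← Ico_union_Ico_eq_Ico hxy hyz,
    lintegral_union measurableSet_Ico
      (Set.Ico_disjoint_Ico.mpr (le_trans (min_le_left _ _) (le_max_right _ _)))]

lemma lper_shift (W : ℝ → ℝ≥0∞) (hW : Measurable W) {T : ℝ} (hper : Periodic W T)
    (k : ℤ) (a b : ℝ) :
    ∫⁻ x in Ico (a + k * T) (b + k * T), W x = ∫⁻ x in Ico a b, W x := by
  rw [lshift W hW (k * T) a b]
  refine setLIntegral_congr_fun measurableSet_Ico (fun x _ => ?_)
  exact (hper.int_mul k) x

lemma lper (W : ℝ → ℝ≥0∞) (hW : Measurable W) {T : ℝ} (hT : 0 < T) (hper : Periodic W T)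
    (a : ℝ) : ∫⁻ x in Ico a (a + T), W x = ∫⁻ x in Ico 0 T, W x := by
  obtain ⟨k, a', hk, h0, h1⟩ : ∃ (k : ℤ) (a' : ℝ), a = a' + k * T ∧ 0 ≤ a' ∧ a' < T := by
    refine ⟨⌊a / T⌋, a - ⌊a / T⌋ * T, by ring, ?_, ?_⟩
    · have h := Int.floor_le (a / T)
      have : (⌊a / T⌋ : ℝ) * T ≤ a := by
        rw [← le_div_iff₀ hT]; exact h
      linarith
    · have h := Int.lt_floor_add_one (a / T)
      have : a < ((⌊a / T⌋ : ℝ) + 1) * T := by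
        rw [← div_lt_iff₀ hT]; exact h
      linarith
  subst hk
  have e1 : a' + ↑k * T + T = (a' + T) + ↑k * T := by ring
  rw [e1, lper_shift W hW hper k a' (a' + T)]
  rw [lsplit W (show a' ≤ T by linarith) (show T ≤ a' + T by linarith)]
  rw [lsplit W (show (0:ℝ) ≤ a' from h0) (show a' ≤ T by linarith)]
  have e2 : ∫⁻ x in Ico T (a' + T), W x = ∫⁻ x in Ico 0 a', W x := by
    have h5 := lper_shift W hW hper 1 0 a'
    push_cast at h5
    rw [one_mul, zero_add] at h5
    exact h5
  rw [e2]
  exact add_comm _ _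

lemma lpern (W : ℝ → ℝ≥0∞) (hW : Measurable W) {T : ℝ} (hT : 0 < T) (hper : Periodic W T)
    (m : ℕ) (a : ℝ) :
    ∫⁻ x in Ico a (a + m * T), W x = m * ∫⁻ x in Ico 0 T, W x := by
  induction m with
  | zero => simp
  | succ m ih =>
      have e1 : a + (↑(m+1)) * T = (a + m * T) + T := by push_cast; ring
      have hm : (0:ℝ) ≤ (m:ℝ) * T := mul_nonneg (Nat.cast_nonneg m) hT.le
      rw [e1, lsplit W (show a ≤ a + (m:ℝ) * T by linarith) (show a + (m:ℝ)*T ≤ a + (m:ℝ)*T + T by linarith),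
        ih, lper W hW hT hper (a + (m:ℝ) * T)]
      push_cast
      rw [add_mul, one_mul]


lemma lthet (W : ℝ → ℝ≥0∞) (hW : Measurable W) (hper : Periodic W (2*π)) (n : ℕ) (hn : 0 < n) :
    ∫⁻ θ in Ioo (-π) π, W ((n:ℝ) * θ) = ∫⁻ φ in Ioo (-π) π, W φ := by
  have hnr : (0:ℝ) < n := Nat.cast_pos.mpr hn
  have hIoo : (volume.restrict (Ioo (-π) π)) = volume.restrict (Ico (-π) π) :=
    Measure.restrict_congr_set Ioo_ae_eq_Ico
  rw [hIoo]
  have hpre : ((n:ℝ) * ·) ⁻¹' Ico (-((n:ℝ)*π)) ((n:ℝ)*π) = Ico (-π) π := by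
    ext x
    simp only [mem_preimage, mem_Ico]
    constructor <;> rintro ⟨h1, h2⟩ <;> constructor <;> nlinarith
  have h1 : ∫⁻ θ in Ico (-π) π, W ((n:ℝ) * θ)
      = ENNReal.ofReal (n:ℝ)⁻¹ * ∫⁻ x in Ico (-((n:ℝ)*π)) ((n:ℝ)*π), W x := by
    rw [← hpre]; exact lscale W hW hnr _ measurableSet_Ico
  have h2 : ∫⁻ x in Ico (-((n:ℝ)*π)) ((n:ℝ)*π), W x = n * ∫⁻ x in Ico 0 (2*π), W x := by
    have := lpern W hW (by positivity : (0:ℝ) < 2*π) hper n (-((n:ℝ)*π))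
    rw [show -((n:ℝ)*π) + n * (2*π) = (n:ℝ)*π by ring] at this
    exact this
  have h3 : ∫⁻ x in Ico (-π) π, W x = ∫⁻ x in Ico 0 (2*π), W x := by
    have := lper W hW (by positivity : (0:ℝ) < 2*π) hper (-π)
    rw [show -π + 2*π = π by ring] at this
    exact this
  rw [h1, h2, h3, ← mul_assoc]
  have : ENNReal.ofReal (n:ℝ)⁻¹ * n = 1 := by
    rw [← ENNReal.ofReal_natCast n, ← ENNReal.ofReal_mul (by positivity), inv_mul_cancel₀ hnr.ne']
    simp
  rw [this, one_mul]

lemma lrpow (K : ℝ → ℝ≥0∞) (n : ℕ) (hn : 0 < n) :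
    ∫⁻ s in Ioi (0:ℝ), ENNReal.ofReal s * K s
      = ∫⁻ r in Ioi (0:ℝ), ENNReal.ofReal ((n:ℝ) * r ^ (n-1))
          * (ENNReal.ofReal (r ^ n) * K (r ^ n)) := by
  have himg : (fun r : ℝ => r ^ n) '' Ioi 0 = Ioi 0 := by
    apply Subset.antisymm
    · rintro s ⟨r, hr, rfl⟩; exact pow_pos (show (0:ℝ) < r from hr) n
    · intro s hs
      refine ⟨s ^ ((n:ℝ)⁻¹), Real.rpow_pos_of_pos hs _, ?_⟩
      dsimp only
      rw [← Real.rpow_natCast (s ^ ((n:ℝ)⁻¹)) n, ← Real.rpow_mul (le_of_lt hs),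
        inv_mul_cancel₀ (by exact_mod_cast hn.ne' : ((n:ℝ) ≠ 0)), Real.rpow_one]
  have hinj : InjOn (fun r : ℝ => r ^ n) (Ioi 0) :=
    (pow_left_strictMonoOn₀ hn.ne').injOn.mono (fun x hx => le_of_lt hx)
  have hder : ∀ x ∈ Ioi (0:ℝ), HasFDerivWithinAt (fun r : ℝ => r ^ n)
      ((1 : ℝ →L[ℝ] ℝ).smulRight ((n:ℝ) * x ^ (n-1))) (Ioi 0) x :=
    fun x _ => ((hasDerivAt_pow n x).hasDerivWithinAt).hasFDerivWithinAt
  have := lintegral_image_eq_lintegral_abs_det_fderiv_mul volume measurableSet_Ioi hder hinj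
    (fun s => ENNReal.ofReal s * K s)
  rw [himg] at this
  rw [this]
  refine setLIntegral_congr_fun measurableSet_Ioi (fun r hr => ?_)
  have hr' : (0:ℝ) < r := hr
  have hnr : (0:ℝ) < n := Nat.cast_pos.mpr hn
  rw [ContinuousLinearMap.det_smulRight, ContinuousLinearMap.one_apply, one_mul, abs_of_pos (mul_pos hnr (pow_pos hr' _))]

lemma ltonelli (g : ℝ × ℝ → ℝ≥0∞) (hg : Measurable g) (s t : Set ℝ) (hs : MeasurableSet s)
    (ht : MeasurableSet t) :
    ∫⁻ p in s ×ˢ t, g p = ∫⁻ x in s, ∫⁻ y in t, g (x, y) := by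
  have : (volume : Measure (ℝ × ℝ)).restrict (s ×ˢ t)
      = (volume.restrict s).prod (volume.restrict t) := by
    rw [Measure.volume_eq_prod ℝ ℝ, Measure.prod_restrict]
  rw [this, lintegral_prod _ hg.aemeasurable]

lemma rint (c E : ℝ) (hc : 0 < c) (hE : 0 < E) :
    IntegrableOn (fun r : ℝ => r * (E / (1 + c * r ^ 2) ^ 2)) (Ioi 0)
    ∧ ∫ r in Ioi 0, r * (E / (1 + c * r ^ 2) ^ 2) = E / (2 * c) := by
  set g : ℝ → ℝ := fun r => -(E / (2 * c)) * (1 + c * r ^ 2)⁻¹ with hg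
  have hden : ∀ r : ℝ, (0:ℝ) < 1 + c * r ^ 2 := fun r => by positivity
  have hderiv : ∀ r : ℝ, HasDerivAt g (r * (E / (1 + c * r ^ 2) ^ 2)) r := by
    intro r
    have h1 : HasDerivAt (fun r : ℝ => 1 + c * r ^ 2) (2 * c * r) r := by
      have := ((hasDerivAt_pow 2 r).const_mul c).const_add 1
      simpa [mul_comm, mul_assoc, mul_left_comm] using this
    have h2 := (h1.inv (hden r).ne')
    have h3 : HasDerivAt g (-(E / (2 * c)) * (-(2 * c * r) / (1 + c * r ^ 2) ^ 2)) r :=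
      h2.const_mul (-(E / (2 * c)))
    convert h3 using 1
    have hc0 := hc.ne'
    have hd0 := (hden r).ne'
    field_simp
  have htend : Filter.Tendsto g Filter.atTop (nhds 0) := by
    have h1 : Filter.Tendsto (fun r : ℝ => 1 + c * r ^ 2) Filter.atTop Filter.atTop := by
      apply Filter.tendsto_atTop_add_const_left
      exact (Filter.tendsto_pow_atTop (two_ne_zero)).const_mul_atTop hc
    have h2 := h1.inv_tendsto_atTop
    have := h2.const_mul (-(E / (2 * c)))
    simpa [hg, neg_mul] using this
  have hnn : ∀ r ∈ Ioi (0:ℝ), 0 ≤ r * (E / (1 + c * r ^ 2) ^ 2) := by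
    intro r hr
    have : (0:ℝ) < r := hr
    positivity
  have hcont : ContinuousWithinAt g (Ici 0) 0 := ((hderiv 0).continuousAt).continuousWithinAt
  constructor
  · exact integrableOn_Ioi_deriv_of_nonneg hcont (fun x _ => hderiv x) hnn htend
  · have := integral_Ioi_of_hasDerivAt_of_nonneg hcont (fun x _ => hderiv x) hnn htend
    rw [this]
    norm_num [hg]

lemma hPsymm (p : ℝ × ℝ) :
    Complex.polarCoord.symm p = (p.1 : ℂ) * Complex.exp (p.2 * Complex.I) := by
  rw [Complex.polarCoord_symm_apply, Complex.exp_mul_I]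
  push_cast
  ring

lemma hPpow (p : ℝ × ℝ) (n : ℕ) :
    ((p.1 : ℂ) * Complex.exp (p.2 * Complex.I)) ^ n
      = ((p.1 ^ n : ℝ) : ℂ) * Complex.exp (((n : ℝ) * p.2 : ℝ) * Complex.I) := by
  rw [mul_pow, ← Complex.exp_nat_mul]
  push_cast
  ring_nf

lemma hPabs (p : ℝ × ℝ) :
    ‖(p.1 : ℂ) * Complex.exp (p.2 * Complex.I)‖ = |p.1| := by
  rw [norm_mul, Complex.norm_exp]
  simp

lemma hPper (s φ : ℝ) : ((s : ℂ) * Complex.exp (((φ + 2*π : ℝ) : ℂ) * Complex.I))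
    = (s : ℂ) * Complex.exp ((φ : ℂ) * Complex.I) := by
  congr 1
  rw [show ((φ + 2*π : ℝ) : ℂ) * Complex.I = φ * Complex.I + 2*π*Complex.I by push_cast; ring,
    Complex.exp_add, Complex.exp_two_pi_mul_I, mul_one]


theorem stmt3 (h : ℝ) (hh : 0 < h) (N : ℕ) (hN : 0 < N) (μ : ℝ)
    (V : ℂ → ℝ)
    (hV : V = fun y => μ - 2 * Real.log
      (1 + (Real.exp μ * h / (8 * (N + 1) ^ 2)) * ‖y ^ (N + 1) - 1‖ ^ 2)) :
    (∫ y : ℂ, ‖y‖ ^ (2 * N) * Real.exp (V y))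
      = 8 * Real.pi * (N + 1) / h := by
  have hexp := Real.exp_pos μ
  set n : ℕ := N + 1 with hn
  have hn0 : 0 < n := Nat.succ_pos N
  set c : ℝ := Real.exp μ * h / (8 * ((N : ℝ) + 1) ^ 2) with hc
  have hcpos : 0 < c := by positivity
  set Q : ℂ → ℝ := fun w => Real.exp μ / (1 + c * ‖w - 1‖ ^ 2) ^ 2 with hQ
  have hdpos : ∀ w : ℂ, (0:ℝ) < 1 + c * ‖w - 1‖ ^ 2 := fun w => by positivity
  have hQpos : ∀ w, 0 < Q w := fun w => div_pos hexp (pow_pos (hdpos w) 2)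
  have habs1 : Continuous fun w : ℂ => ‖w - 1‖ :=
    continuous_norm.comp (continuous_id.sub continuous_const)
  have hden1 : Continuous fun w : ℂ => (1 + c * ‖w - 1‖ ^ 2) ^ 2 :=
    (continuous_const.add (continuous_const.mul (habs1.pow 2))).pow 2
  have hQcont : Continuous Q := continuous_const.div hden1 fun w => (pow_pos (hdpos w) 2).ne'
  -- the integrand rewritten
  have step0 : ∀ y : ℂ, ‖y‖ ^ (2 * N) * Real.exp (V y)
      = ‖y‖ ^ (2 * N) * Q (y ^ n) := by
    intro y
    rw [hV]
    congr 1
    have ht := hdpos (y ^ n)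
    have harg : (1 + Real.exp μ * h / (8 * ((N:ℝ) + 1) ^ 2) * ‖y ^ (N + 1) - 1‖ ^ 2)
        = 1 + c * ‖y ^ n - 1‖ ^ 2 := by rw [hc, hn]
    simp only [harg]
    rw [Real.exp_sub, two_mul, Real.exp_add, Real.exp_log (hdpos (y ^ n)), hQ]
    rw [← pow_two]
  -- measurable pieces
  have hGcont : Continuous fun y : ℂ => ‖y‖ ^ (2 * N) * Q (y ^ n) :=
    (continuous_norm.pow (2 * N)).mul (hQcont.comp (continuous_pow n))
  set G : ℂ → ℝ≥0∞ := fun y => ENNReal.ofReal (‖y‖ ^ (2 * N) * Q (y ^ n)) with hG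
  have hGmeas : Measurable G := ENNReal.measurable_ofReal.comp hGcont.measurable
  have hPcont : Continuous fun p : ℝ × ℝ => (p.1 : ℂ) * Complex.exp (p.2 * Complex.I) := by
    fun_prop
  have hPQmeas : Measurable fun p : ℝ × ℝ =>
      ENNReal.ofReal (Q ((p.1 : ℂ) * Complex.exp (p.2 * Complex.I))) :=
    ENNReal.measurable_ofReal.comp (hQcont.comp hPcont).measurable
  set K : ℝ → ℝ≥0∞ := fun s => ∫⁻ φ in Ioo (-π) π,
      ENNReal.ofReal (Q ((s : ℂ) * Complex.exp (φ * Complex.I))) with hK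
  have hKmeas : Measurable K := Measurable.lintegral_prod_right' hPQmeas
  set J : ℝ≥0∞ := ∫⁻ y : ℂ, G y with hJ
  -- step 1 : polar coordinates + Tonelli
  have e1 : J = ∫⁻ r in Ioi (0:ℝ), ∫⁻ θ in Ioo (-π) π,
      ENNReal.ofReal r * G ((r : ℂ) * Complex.exp (θ * Complex.I)) := by
    have e := (Complex.lintegral_comp_polarCoord_symm' G hGmeas).symm
    simp only [hPsymm] at e
    rw [polarCoord_target] at e
    have hm2 : Measurable fun p : ℝ × ℝ =>
        ENNReal.ofReal p.1 * G ((p.1 : ℂ) * Complex.exp (p.2 * Complex.I)) :=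
      measurable_fst.ennreal_ofReal.mul (hGmeas.comp hPcont.measurable)
    rw [hJ, e, ltonelli _ hm2 _ _ measurableSet_Ioi measurableSet_Ioo]
  -- step 2 : inner integral for fixed r
  have step2 : ∀ r : ℝ, r ∈ Ioi (0:ℝ) →
      (∫⁻ θ in Ioo (-π) π, ENNReal.ofReal r * G ((r : ℂ) * Complex.exp (θ * Complex.I)))
        = ENNReal.ofReal (r ^ (2 * N + 1)) * K (r ^ n) := by
    intro r hr
    have hr' : (0:ℝ) < r := hr
    have inner_eq : ∀ θ : ℝ, ENNReal.ofReal r * G ((r : ℂ) * Complex.exp (θ * Complex.I))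
        = ENNReal.ofReal (r ^ (2 * N + 1)) *
          ENNReal.ofReal (Q (((r ^ n : ℝ) : ℂ) * Complex.exp ((((n : ℝ) * θ : ℝ)) * Complex.I))) := by
      intro θ
      have habs : ‖(r : ℂ) * Complex.exp ((θ:ℝ) * Complex.I)‖ = r := by
        have := hPabs (r, θ)
        simpa [abs_of_pos hr'] using this
      have hpow : ((r : ℂ) * Complex.exp ((θ:ℝ) * Complex.I)) ^ n
          = ((r ^ n : ℝ) : ℂ) * Complex.exp ((((n : ℝ) * θ : ℝ)) * Complex.I) := hPpow (r, θ) n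
      rw [hG]
      simp only [habs, hpow]
      rw [← ENNReal.ofReal_mul hr'.le,
        ← ENNReal.ofReal_mul (by positivity : (0:ℝ) ≤ r ^ (2 * N + 1))]
      congr 1
      ring
    simp only [inner_eq]
    rw [lintegral_const_mul' _ _ ENNReal.ofReal_ne_top]
    congr 1
    have hWper : Function.Periodic
        (fun φ : ℝ => ENNReal.ofReal (Q (((r ^ n : ℝ) : ℂ) * Complex.exp (φ * Complex.I)))) (2*π) := by
      intro φ
      simp only
      rw [hPper (r ^ n) φ]
    have := lthet (fun φ : ℝ => ENNReal.ofReal (Q (((r ^ n : ℝ) : ℂ) * Complex.exp (φ * Complex.I))))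
      (by fun_prop) hWper n hn0
    exact this
  have step3 : J = ∫⁻ r in Ioi (0:ℝ), ENNReal.ofReal (r ^ (2 * N + 1)) * K (r ^ n) := by
    rw [e1]
    exact setLIntegral_congr_fun measurableSet_Ioi step2
  -- step 4 : change of variables r ↦ r^n
  have step4 : ∫⁻ s in Ioi (0:ℝ), ENNReal.ofReal s * K s = (n : ℝ≥0∞) * J := by
    rw [lrpow K n hn0, step3, ← lintegral_const_mul' _ _ (ENNReal.natCast_ne_top n)]
    refine setLIntegral_congr_fun measurableSet_Ioi (fun r hr => ?_)
    have hr' : (0:ℝ) < r := hr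
    rw [ENNReal.ofReal_mul (by positivity : (0:ℝ) ≤ (n:ℝ)), ENNReal.ofReal_natCast]
    rw [mul_assoc, ← mul_assoc (ENNReal.ofReal (r ^ (n-1))), ← ENNReal.ofReal_mul (by positivity),
      ← pow_add]
    have hexp' : n - 1 + n = 2 * N + 1 := by omega
    rw [hexp']
  -- step 5 : back via Tonelli and polar coordinates
  have step5 : ∫⁻ s in Ioi (0:ℝ), ENNReal.ofReal s * K s = ∫⁻ w : ℂ, ENNReal.ofReal (Q w) := by
    have hQmeas : Measurable fun w : ℂ => ENNReal.ofReal (Q w) :=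
      ENNReal.measurable_ofReal.comp hQcont.measurable
    have e := Complex.lintegral_comp_polarCoord_symm' _ hQmeas
    rw [← e, polarCoord_target]
    simp only [hPsymm]
    have hm3 : Measurable fun p : ℝ × ℝ =>
        ENNReal.ofReal p.1 * ENNReal.ofReal (Q ((p.1 : ℂ) * Complex.exp (p.2 * Complex.I))) :=
      measurable_fst.ennreal_ofReal.mul hPQmeas
    rw [ltonelli _ hm3 _ _ measurableSet_Ioi measurableSet_Ioo]
    refine setLIntegral_congr_fun measurableSet_Ioi (fun s hs => ?_)
    exact (lintegral_const_mul' (ENNReal.ofReal s) _ ENNReal.ofReal_ne_top).symm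
  -- step 6 : translation by 1
  have step6 : ∫⁻ w : ℂ, ENNReal.ofReal (Q w)
      = ∫⁻ z : ℂ, ENNReal.ofReal (Real.exp μ / (1 + c * ‖z‖ ^ 2) ^ 2) := by
    have hQmeas : Measurable fun w : ℂ => ENNReal.ofReal (Q w) :=
      ENNReal.measurable_ofReal.comp hQcont.measurable
    have e := (measurePreserving_add_right (volume : Measure ℂ) 1).lintegral_comp hQmeas
    rw [← e]
    congr 1
    ext z
    rw [hQ]
    simp only []
    rw [add_sub_cancel_right]
  -- step 7 : compute the Gaussian-like integral
  have step7 : ∫⁻ z : ℂ, ENNReal.ofReal (Real.exp μ / (1 + c * ‖z‖ ^ 2) ^ 2)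
      = ENNReal.ofReal (2 * π) * ENNReal.ofReal (Real.exp μ / (2 * c)) := by
    have hcont7 : Continuous fun z : ℂ => Real.exp μ / (1 + c * ‖z‖ ^ 2) ^ 2 := by
      apply continuous_const.div
      · exact (continuous_const.add (continuous_const.mul (continuous_norm.pow 2))).pow 2
      · intro z
        have : (0:ℝ) < 1 + c * ‖z‖ ^ 2 := by positivity
        positivity
    have hmeas : Measurable fun z : ℂ =>
        ENNReal.ofReal (Real.exp μ / (1 + c * ‖z‖ ^ 2) ^ 2) :=
      ENNReal.measurable_ofReal.comp hcont7.measurable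
    rw [← Complex.lintegral_comp_polarCoord_symm' _ hmeas, polarCoord_target]
    simp only [hPsymm]
    have hm4 : Measurable fun p : ℝ × ℝ => ENNReal.ofReal p.1 *
        ENNReal.ofReal (Real.exp μ / (1 + c * (‖(p.1:ℂ) * Complex.exp (p.2 * Complex.I)‖) ^ 2) ^ 2) :=
      measurable_fst.ennreal_ofReal.mul ((hmeas.comp hPcont.measurable))
    rw [ltonelli _ hm4 _ _ measurableSet_Ioi measurableSet_Ioo]
    have inner : ∀ r : ℝ, r ∈ Ioi (0:ℝ) → (∫⁻ θ in Ioo (-π) π, ENNReal.ofReal r *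
        ENNReal.ofReal (Real.exp μ / (1 + c * (‖(r:ℂ) * Complex.exp ((θ:ℝ) * Complex.I)‖) ^ 2) ^ 2))
        = ENNReal.ofReal (2 * π) * ENNReal.ofReal (r * (Real.exp μ / (1 + c * r ^ 2) ^ 2)) := by
      intro r hr
      have hr' : (0:ℝ) < r := hr
      have habs : ∀ θ : ℝ, ‖(r : ℂ) * Complex.exp ((θ:ℝ) * Complex.I)‖ = r :=
        fun θ => by simpa [abs_of_pos hr'] using hPabs (r, θ)
      simp only [habs]
      rw [setLIntegral_const, Real.volume_Ioo, ← ENNReal.ofReal_mul hr'.le]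
      rw [show π - -π = 2 * π by ring]
      ring
    rw [setLIntegral_congr_fun measurableSet_Ioi inner]
    rw [lintegral_const_mul' _ _ ENNReal.ofReal_ne_top]
    congr 1
    obtain ⟨hint, hval⟩ := rint c (Real.exp μ) hcpos hexp
    have hnn7 : 0 ≤ᵐ[volume.restrict (Ioi (0:ℝ))] fun r : ℝ => r * (Real.exp μ / (1 + c * r ^ 2) ^ 2) := by
      refine (ae_restrict_iff' measurableSet_Ioi).mpr (Filter.Eventually.of_forall fun r hr => ?_)
      have hr' : (0:ℝ) < r := hr
      positivity
    rw [← ofReal_integral_eq_lintegral_ofReal hint hnn7, hval]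
  -- assemble everything
  have hfinal : (n : ℝ≥0∞) * J = ENNReal.ofReal (2 * π) * ENNReal.ofReal (Real.exp μ / (2 * c)) := by
    rw [← step4, step5, step6, step7]
  have hJval : J = (ENNReal.ofReal (2 * π) * ENNReal.ofReal (Real.exp μ / (2 * c))) / (n : ℝ≥0∞) :=
    (ENNReal.eq_div_iff (by exact_mod_cast hn0.ne' : (n : ℝ≥0∞) ≠ 0)
      (ENNReal.natCast_ne_top n)).mpr hfinal
  have hInt : (∫ y : ℂ, ‖y‖ ^ (2 * N) * Real.exp (V y)) = J.toReal := by
    rw [integral_congr_ae (Filter.Eventually.of_forall step0)]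
    rw [integral_eq_lintegral_of_nonneg_ae (Filter.Eventually.of_forall fun y =>
      mul_nonneg (pow_nonneg (norm_nonneg y) _) (hQpos _).le)
      hGcont.aestronglyMeasurable]
  rw [hInt, hJval, ENNReal.toReal_div, ENNReal.toReal_mul,
    ENNReal.toReal_ofReal (by positivity : (0:ℝ) ≤ 2 * π),
    ENNReal.toReal_ofReal (by positivity : (0:ℝ) ≤ Real.exp μ / (2 * c)),
    ENNReal.toReal_natCast]
  have hnr : ((n : ℕ) : ℝ) = (N : ℝ) + 1 := by rw [hn]; push_cast; ring
  rw [hnr, hc]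
  have h1 : h ≠ 0 := hh.ne'
  have h2 : Real.exp μ ≠ 0 := hexp.ne'
  have h3 : ((N : ℝ) + 1) ≠ 0 := by positivity
  field_simp
end
end

section
/- Let N be a positive integer, λ > 0, μ ∈ ℝ, P ∈ ℂ, and set c = e^μ/λ. Then ∫_{ℝ²} (1 − c|z^{N+1} − P|²)|z|^{2N} / (1 + c|z^{N+1} − P|²)³ dz = 0. -/
open MeasureTheory Set Real Filter Topology

noncomputable def hfun (c s : ℝ) : ℝ := (1 - c * s) / (1 + c * s) ^ 3

lemma hfun_cont {c : ℝ} (hc : 0 < c) {α : Type*} [TopologicalSpace α] {s : α → ℝ}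
    (hs : Continuous s) (hs0 : ∀ x, 0 ≤ s x) : Continuous fun x => hfun c (s x) := by
  unfold hfun
  apply Continuous.div (by fun_prop) (by fun_prop)
  intro x
  have h0 := hs0 x
  have h1 : (0:ℝ) < 1 + c * s x := by nlinarith
  exact (pow_pos h1 3).ne'

lemma hfun_abs_le {c : ℝ} (hc : 0 < c) {s : ℝ} (hs : 0 ≤ s) :
    |hfun c s| ≤ 1 / (1 + c * s) ^ 2 := by
  have h1 : (0:ℝ) < 1 + c * s := by nlinarith
  rw [hfun, abs_div, abs_of_pos (pow_pos h1 3), div_le_div_iff₀ (pow_pos h1 3) (pow_pos h1 2)]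
  have h2 : |1 - c * s| ≤ 1 + c * s := by
    rw [abs_le]; constructor <;> nlinarith
  calc |1 - c * s| * (1 + c * s) ^ 2 ≤ (1 + c * s) * (1 + c * s) ^ 2 :=
        mul_le_mul_of_nonneg_right h2 (pow_nonneg h1.le 2)
    _ = 1 * (1 + c * s) ^ 3 := by ring

lemma radial_zero {c : ℝ} (hc : 0 < c) : ∫ y in Ioi (0:ℝ), y * hfun c (y ^ 2) = 0 := by
  set F : ℝ → ℝ := fun y => y ^ 2 / (2 * (1 + c * y ^ 2) ^ 2) with hF
  have hpos : ∀ y : ℝ, (0:ℝ) < 1 + c * y ^ 2 := fun y => by nlinarith [sq_nonneg y]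
  have hderiv : ∀ y ∈ Ici (0:ℝ), HasDerivAt F (y * hfun c (y ^ 2)) y := by
    intro y _
    have h1 := hpos y
    have hu : HasDerivAt (fun y : ℝ => y ^ 2) (2 * y) y := by
      simpa using hasDerivAt_pow 2 y
    have hg : HasDerivAt (fun y : ℝ => 1 + c * y ^ 2) (c * (2 * y)) y :=
      (hu.const_mul c).const_add 1
    have hv : HasDerivAt (fun y : ℝ => 2 * (1 + c * y ^ 2) ^ 2)
        (2 * (2 * (1 + c * y ^ 2) ^ 1 * (c * (2 * y)))) y := by
      exact ((hg.pow 2)).const_mul 2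
    have hvne : 2 * (1 + c * y ^ 2) ^ 2 ≠ 0 := by positivity
    have := hu.div hv hvne
    refine this.congr_deriv ?_
    rw [hfun]
    field_simp
    ring
  have hK : IntegrableOn (fun y : ℝ => y / (1 + c * y ^ 2) ^ 2) (Ioi 0) := by
    have hg : ∀ y ∈ Ici (0:ℝ), HasDerivAt (fun y : ℝ => -(1 / (2 * c)) * (1 + c * y ^ 2)⁻¹)
        (y / (1 + c * y ^ 2) ^ 2) y := by
      intro y _
      have h1 := hpos y
      have hu : HasDerivAt (fun y : ℝ => y ^ 2) (2 * y) y := by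
        simpa using hasDerivAt_pow 2 y
      have hg : HasDerivAt (fun y : ℝ => 1 + c * y ^ 2) (c * (2 * y)) y :=
        (hu.const_mul c).const_add 1
      have := (hg.inv h1.ne').const_mul (-(1 / (2 * c)))
      refine this.congr_deriv ?_
      field_simp
    apply integrableOn_Ioi_deriv_of_nonneg' hg
    · intro y hy
      have h1 := hpos y
      have : (0:ℝ) < y := hy
      positivity
    · have h1 : Tendsto (fun y : ℝ => 1 + c * y ^ 2) atTop atTop :=
        tendsto_atTop_add_const_left _ 1 ((tendsto_pow_atTop two_ne_zero).const_mul_atTop hc)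
      have h2 : Tendsto (fun y : ℝ => (1 + c * y ^ 2)⁻¹) atTop (𝓝 0) := h1.inv_tendsto_atTop
      have := h2.const_mul (-(1 / (2 * c)))
      simpa using this
  have hint : IntegrableOn (fun y : ℝ => y * hfun c (y ^ 2)) (Ioi 0) := by
    apply Integrable.mono hK
    · exact ((continuous_id.mul (hfun_cont hc (by fun_prop) fun y => sq_nonneg y)).aestronglyMeasurable).restrict
    · rw [ae_restrict_iff' measurableSet_Ioi]
      filter_upwards with y hy
      have h1 := hpos y
      have hy0 : (0:ℝ) < y := hy
      rw [Real.norm_eq_abs, Real.norm_eq_abs, abs_mul, abs_of_pos hy0,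
        abs_of_pos (by positivity : (0:ℝ) < y / (1 + c * y ^ 2) ^ 2)]
      calc y * |hfun c (y ^ 2)| ≤ y * (1 / (1 + c * y ^ 2) ^ 2) :=
            mul_le_mul_of_nonneg_left (hfun_abs_le hc (sq_nonneg y)) hy0.le
        _ = y / (1 + c * y ^ 2) ^ 2 := by ring
  have htend : Tendsto F atTop (𝓝 0) := by
    apply squeeze_zero' (g := fun y : ℝ => (2 * c ^ 2 * y ^ 2)⁻¹)
    · filter_upwards [eventually_ge_atTop (0:ℝ)] with y hy
      have h1 := hpos y
      rw [hF]
      positivity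
    · filter_upwards [eventually_gt_atTop (0:ℝ)] with y hy
      have h1 := hpos y
      rw [hF]
      rw [inv_eq_one_div, div_le_div_iff₀ (by positivity) (by positivity)]
      nlinarith [sq_nonneg (c * y ^ 2)]
    · apply Tendsto.inv_tendsto_atTop
      apply Tendsto.const_mul_atTop (by positivity : (0:ℝ) < 2 * c ^ 2)
      exact tendsto_pow_atTop two_ne_zero
  have := integral_Ioi_of_hasDerivAt_of_tendsto' hderiv hint htend
  rw [this, hF]
  norm_num

lemma planar_zero {c : ℝ} (hc : 0 < c) : ∫ w : ℂ, hfun c (‖w‖ ^ 2) = 0 := by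
  have h1 : (∫ w : ℂ, hfun c (‖w‖ ^ 2)) = ∫ w : ℂ, (fun y : ℝ => hfun c (y ^ 2)) ‖w‖ := by
    rfl
  rw [h1, integral_fun_norm_addHaar (volume : Measure ℂ) (fun y : ℝ => hfun c (y ^ 2))]
  simp only [Complex.finrank_real_complex, smul_eq_mul]
  have h2 : ∫ y in Ioi (0:ℝ), y ^ (2 - 1) * hfun c (y ^ 2) = 0 := by
    simpa using radial_zero hc
  rw [h2, mul_zero, smul_zero]

lemma planarP_zero {c : ℝ} (hc : 0 < c) (P : ℂ) :
    ∫ w : ℂ, hfun c (‖w - P‖ ^ 2) = 0 := by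
  have := integral_sub_right_eq_self (μ := (volume : Measure ℂ))
    (fun w : ℂ => hfun c (‖w‖ ^ 2)) P
  rw [this]
  exact planar_zero hc

lemma cont_psymm : Continuous (Complex.polarCoord.symm : ℝ × ℝ → ℂ) := by
  have h : (Complex.polarCoord.symm : ℝ × ℝ → ℂ)
      = fun p : ℝ × ℝ => p.1 * (Real.cos p.2 + Real.sin p.2 * Complex.I) :=
    funext fun p => Complex.polarCoord_symm_apply p
  rw [h]
  fun_prop

lemma psymm_pow (p : ℝ × ℝ) (n : ℕ) :
    (Complex.polarCoord.symm p) ^ n = Complex.polarCoord.symm (p.1 ^ n, (n : ℝ) * p.2) := by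
  simp only [Complex.polarCoord_symm_apply]
  have h : ∀ θ : ℝ, ((Real.cos θ : ℂ) + (Real.sin θ : ℂ) * Complex.I)
      = Complex.exp ((θ : ℂ) * Complex.I) := by
    intro θ; rw [Complex.exp_mul_I, Complex.ofReal_cos, Complex.ofReal_sin]
  rw [mul_pow, h, h, ← Complex.exp_nat_mul]
  push_cast
  ring_nf

lemma psymm_periodic (u : ℝ) :
    Function.Periodic (fun φ : ℝ => Complex.polarCoord.symm (u, φ)) (2 * π) := by
  intro φ
  simp [Complex.polarCoord_symm_apply, Real.cos_add_two_pi, Real.sin_add_two_pi]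

lemma intM {c : ℝ} (hc : 0 < c) {q : ℝ} (hq : 0 ≤ q) (N : ℕ) :
    IntegrableOn (fun r : ℝ => r ^ (2 * N + 1) / (1 + c * (r ^ (N + 1) - q) ^ 2) ^ 2) (Ioi 0) := by
  have hden : ∀ r : ℝ, (0:ℝ) < 1 + c * (r ^ (N + 1) - q) ^ 2 := fun r => by
    nlinarith [sq_nonneg (r ^ (N + 1) - q)]
  set R : ℝ := 2 * q + 1 with hR
  have hR0 : (0:ℝ) < R := by simp [hR]; linarith
  have hR1 : (1:ℝ) ≤ R := by simp [hR]; linarith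
  have hcont : Continuous fun r : ℝ => r ^ (2 * N + 1) / (1 + c * (r ^ (N + 1) - q) ^ 2) ^ 2 := by
    apply Continuous.div (by fun_prop) (by fun_prop)
    intro r
    exact (pow_pos (hden r) 2).ne'
  rw [← Ioc_union_Ioi_eq_Ioi hR0.le]
  apply IntegrableOn.union
  · exact hcont.integrableOn_Ioc
  · -- tail bound by (16/c^2) * (r^3)⁻¹
    have base : IntegrableOn (fun r : ℝ => r ^ (-3 : ℝ)) (Ioi R) :=
      integrableOn_Ioi_rpow_of_lt (by norm_num) hR0
    have base2 : IntegrableOn (fun r : ℝ => (16 / c ^ 2) * (r ^ 3)⁻¹) (Ioi R) := by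
      apply IntegrableOn.congr_fun (base.const_mul (16 / c ^ 2)) _ measurableSet_Ioi
      intro r hr
      have hr0 : (0:ℝ) < r := lt_trans hR0 hr
      have : r ^ (-3 : ℝ) = (r ^ 3)⁻¹ := by
        rw [Real.rpow_neg hr0.le, ← Real.rpow_natCast r 3]
        norm_num
      simp only [this]
    apply Integrable.mono base2 (hcont.aestronglyMeasurable.restrict)
    rw [ae_restrict_iff' measurableSet_Ioi]
    filter_upwards with r hr
    have hr1 : (1:ℝ) ≤ r := le_trans hR1 (le_of_lt hr)
    have hr0 : (0:ℝ) < r := lt_of_lt_of_le one_pos hr1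
    have hu : r ≤ r ^ (N + 1) := le_self_pow₀ hr1 (Nat.succ_ne_zero N)
    have hu0 : (0:ℝ) < r ^ (N + 1) := by positivity
    have h2q : 2 * q < r := by rw [hR] at hr; exact lt_of_le_of_lt (by linarith) hr
    have h1 : r ^ (N + 1) / 2 ≤ r ^ (N + 1) - q := by linarith
    have e1 : (r ^ (N + 1) / 2) ^ 2 ≤ (r ^ (N + 1) - q) ^ 2 :=
      pow_le_pow_left₀ (by positivity) h1 2
    have e3 : c * (r ^ (N + 1) / 2) ^ 2 ≤ 1 + c * (r ^ (N + 1) - q) ^ 2 := by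
      nlinarith
    have e4 : (c * (r ^ (N + 1) / 2) ^ 2) ^ 2 ≤ (1 + c * (r ^ (N + 1) - q) ^ 2) ^ 2 :=
      pow_le_pow_left₀ (by positivity) e3 2
    have e5 : r ^ (2 * N + 1) / (1 + c * (r ^ (N + 1) - q) ^ 2) ^ 2
        ≤ r ^ (2 * N + 1) / (c * (r ^ (N + 1) / 2) ^ 2) ^ 2 :=
      div_le_div_of_nonneg_left (by positivity) (by positivity) e4
    have e6 : r ^ (2 * N + 1) / (c * (r ^ (N + 1) / 2) ^ 2) ^ 2
        = (16 / c ^ 2) * (r ^ (2 * N + 3))⁻¹ := by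
      have h16 : (c * (r ^ (N + 1) / 2) ^ 2) ^ 2 = c ^ 2 * r ^ (4 * N + 4) / 16 := by
        ring
      rw [h16, div_eq_iff (by positivity)]
      field_simp
      ring
    have e7 : (r ^ (2 * N + 3) : ℝ)⁻¹ ≤ (r ^ 3)⁻¹ := by
      apply inv_anti₀ (by positivity)
      exact pow_le_pow_right₀ hr1 (by omega)
    rw [Real.norm_eq_abs, Real.norm_eq_abs,
      abs_of_nonneg (by positivity : (0:ℝ) ≤ r ^ (2*N+1) / (1 + c * (r ^ (N+1) - q) ^ 2) ^ 2),
      abs_of_nonneg (by positivity : (0:ℝ) ≤ (16 / c ^ 2) * (r ^ 3)⁻¹)]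
    calc r ^ (2 * N + 1) / (1 + c * (r ^ (N + 1) - q) ^ 2) ^ 2
        ≤ (16 / c ^ 2) * (r ^ (2 * N + 3))⁻¹ := by rw [← e6]; exact e5
      _ ≤ (16 / c ^ 2) * (r ^ 3)⁻¹ := by
          apply mul_le_mul_of_nonneg_left e7 (by positivity)

lemma intProd {c : ℝ} (hc : 0 < c) (P : ℂ) (N : ℕ) (e : ℝ × ℝ → ℝ) (he : Continuous e) :
    IntegrableOn (fun p : ℝ × ℝ =>
        p.1 ^ (2 * N + 1) * hfun c (‖Complex.polarCoord.symm (p.1 ^ (N + 1), e p) - P‖ ^ 2))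
      (Ioi 0 ×ˢ Ioo (-π) π) := by
  set q : ℝ := ‖P‖ with hq
  have hq0 : 0 ≤ q := norm_nonneg P
  set M : ℝ → ℝ := fun r => r ^ (2 * N + 1) / (1 + c * (r ^ (N + 1) - q) ^ 2) ^ 2 with hM
  have hden : ∀ r : ℝ, (0:ℝ) < 1 + c * (r ^ (N + 1) - q) ^ 2 := fun r => by
    nlinarith [sq_nonneg (r ^ (N + 1) - q)]
  have hMint : IntegrableOn M (Ioi 0) := intM hc hq0 N
  haveI : IsFiniteMeasure ((volume : Measure ℝ).restrict (Ioo (-π) π)) :=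
    ⟨by rw [Measure.restrict_apply_univ]; exact measure_Ioo_lt_top⟩
  have h1 : Integrable (fun p : ℝ × ℝ => M p.1 * (1:ℝ))
      (((volume : Measure ℝ).restrict (Ioi 0)).prod ((volume : Measure ℝ).restrict (Ioo (-π) π))) :=
    Integrable.mul_prod hMint (integrable_const 1)
  simp only [mul_one] at h1
  rw [Measure.prod_restrict, ← Measure.volume_eq_prod] at h1
  have hcont : Continuous fun p : ℝ × ℝ =>
      p.1 ^ (2 * N + 1) * hfun c (‖Complex.polarCoord.symm (p.1 ^ (N + 1), e p) - P‖ ^ 2) := by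
    apply Continuous.mul (by fun_prop)
    apply hfun_cont hc
    · apply Continuous.pow
      apply continuous_norm.comp
      apply Continuous.sub _ continuous_const
      exact cont_psymm.comp (by fun_prop)
    · intro p; positivity
  apply Integrable.mono h1 hcont.aestronglyMeasurable.restrict
  rw [ae_restrict_iff' (measurableSet_Ioi.prod measurableSet_Ioo)]
  filter_upwards with p hp
  obtain ⟨hp1, _⟩ := hp
  have hp1' : (0:ℝ) < p.1 := hp1
  set u : ℝ := p.1 ^ (N + 1) with hu
  have hu0 : (0:ℝ) ≤ u := by positivity
  set w : ℂ := Complex.polarCoord.symm (u, e p) with hw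
  have habs : ‖w‖ = u := by
    rw [hw, Complex.norm_polarCoord_symm, abs_of_nonneg hu0]
  have h2 : (u - q) ^ 2 ≤ ‖w - P‖ ^ 2 := by
    have h1' : |u - q| ≤ ‖w - P‖ := by
      have := abs_norm_sub_norm_le w P
      rwa [habs, ← hq] at this
    calc (u - q) ^ 2 = |u - q| ^ 2 := (sq_abs _).symm
      _ ≤ ‖w - P‖ ^ 2 := pow_le_pow_left₀ (abs_nonneg _) h1' 2
  have h3 : (0:ℝ) < 1 + c * (u - q) ^ 2 := hden p.1
  have h5 : 1 / (1 + c * ‖w - P‖ ^ 2) ^ 2 ≤ 1 / (1 + c * (u - q) ^ 2) ^ 2 := by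
    apply one_div_le_one_div_of_le (pow_pos h3 2)
    apply pow_le_pow_left₀ h3.le
    nlinarith
  rw [Real.norm_eq_abs, Real.norm_eq_abs, abs_mul]
  have hMp : M p.1 = p.1 ^ (2 * N + 1) * (1 / (1 + c * (u - q) ^ 2) ^ 2) := by
    rw [hM]; ring
  rw [abs_of_nonneg (by positivity : (0:ℝ) ≤ p.1 ^ (2 * N + 1)),
    abs_of_nonneg (by positivity : (0:ℝ) ≤ M p.1), hMp]
  apply mul_le_mul_of_nonneg_left _ (by positivity)
  calc |hfun c (‖w - P‖ ^ 2)| ≤ 1 / (1 + c * ‖w - P‖ ^ 2) ^ 2 :=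
        hfun_abs_le hc (by positivity)
    _ ≤ 1 / (1 + c * (u - q) ^ 2) ^ 2 := h5


lemma key {c : ℝ} (hc : 0 < c) (P : ℂ) (N : ℕ) :
    (∫ z : ℂ, (1 - c * ‖z ^ (N + 1) - P‖ ^ 2) * ‖z‖ ^ (2 * N)
      / (1 + c * ‖z ^ (N + 1) - P‖ ^ 2) ^ 3) = 0 := by
  have hn0 : ((N : ℝ) + 1) ≠ 0 := by positivity
  have hππ : -π ≤ π := by linarith [pi_pos]
  have hfeq : (fun z : ℂ => (1 - c * ‖z ^ (N + 1) - P‖ ^ 2) * ‖z‖ ^ (2 * N)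
      / (1 + c * ‖z ^ (N + 1) - P‖ ^ 2) ^ 3)
      = fun z : ℂ => hfun c (‖z ^ (N + 1) - P‖ ^ 2) * ‖z‖ ^ (2 * N) := by
    funext z; rw [hfun, div_mul_eq_mul_div]
  rw [hfeq]
  set G : ℝ → ℝ := fun u => ∫ φ in (-π)..π,
    hfun c (‖Complex.polarCoord.symm (u, φ) - P‖ ^ 2) with hG
  have hHcont : ∀ u : ℝ, Continuous fun φ : ℝ =>
      hfun c (‖Complex.polarCoord.symm (u, φ) - P‖ ^ 2) := by
    intro u
    apply hfun_cont hc
    · apply Continuous.pow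
      exact continuous_norm.comp ((cont_psymm.comp (by fun_prop)).sub continuous_const)
    · intro φ; positivity
  have hHper : ∀ u : ℝ, Function.Periodic (fun φ : ℝ =>
      hfun c (‖Complex.polarCoord.symm (u, φ) - P‖ ^ 2)) (2 * π) := by
    intro u φ
    simp only
    rw [show Complex.polarCoord.symm (u, φ + 2 * π) = Complex.polarCoord.symm (u, φ) from
      psymm_periodic u φ]
  have inner_eq : ∀ u : ℝ, (∫ φ in Ioo (-π) π,
      hfun c (‖Complex.polarCoord.symm (u, φ) - P‖ ^ 2)) = G u := by
    intro u
    rw [hG, ← integral_Ioc_eq_integral_Ioo, ← intervalIntegral.integral_of_le hππ]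
  rw [← Complex.integral_comp_polarCoord_symm
    (fun z => hfun c (‖z ^ (N + 1) - P‖ ^ 2) * ‖z‖ ^ (2 * N)),
    polarCoord_target]
  set Φ : ℝ × ℝ → ℝ := fun p => p.1 ^ (2 * N + 1) *
    hfun c (‖Complex.polarCoord.symm (p.1 ^ (N + 1), ((N : ℝ) + 1) * p.2) - P‖ ^ 2)
    with hΦ
  have hcongr : EqOn (fun p : ℝ × ℝ => p.1 •
      (hfun c (‖(Complex.polarCoord.symm p) ^ (N + 1) - P‖ ^ 2)
        * ‖Complex.polarCoord.symm p‖ ^ (2 * N))) Φ (Ioi 0 ×ˢ Ioo (-π) π) := by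
    intro p hp
    obtain ⟨hp1, _⟩ := hp
    have hp1' : (0:ℝ) < p.1 := hp1
    simp only [hΦ, smul_eq_mul]
    rw [psymm_pow p (N + 1), Complex.norm_polarCoord_symm, abs_of_pos hp1']
    push_cast
    ring
  rw [setIntegral_congr_fun (measurableSet_Ioi.prod measurableSet_Ioo) hcongr]
  have hInt : IntegrableOn Φ (Ioi 0 ×ˢ Ioo (-π) π) (volume.prod volume) := by
    rw [← Measure.volume_eq_prod]
    exact intProd hc P N (fun p => ((N : ℝ) + 1) * p.2) (by fun_prop)
  rw [Measure.volume_eq_prod, setIntegral_prod Φ hInt]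
  have hinner : EqOn (fun r : ℝ => ∫ θ in Ioo (-π) π, Φ (r, θ))
      (fun r : ℝ => r ^ (2 * N + 1) * G (r ^ (N + 1))) (Ioi 0) := by
    intro r _
    simp only [hΦ]
    rw [MeasureTheory.integral_const_mul]
    congr 1
    set u : ℝ := r ^ (N + 1) with hu
    set H : ℝ → ℝ := fun φ => hfun c (‖Complex.polarCoord.symm (u, φ) - P‖ ^ 2)
      with hH
    calc (∫ θ in Ioo (-π) π, H (((N : ℝ) + 1) * θ))
        = ∫ θ in (-π)..π, H (((N : ℝ) + 1) * θ) := by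
          rw [← integral_Ioc_eq_integral_Ioo, ← intervalIntegral.integral_of_le hππ]
      _ = (((N : ℝ) + 1))⁻¹ • ∫ x in (((N : ℝ) + 1) * (-π))..(((N : ℝ) + 1) * π), H x := by
          rw [intervalIntegral.integral_comp_mul_left H hn0]
      _ = (((N : ℝ) + 1))⁻¹ • ((N + 1 : ℤ) • ∫ x in (-π)..π, H x) := by
          have e : (∫ x in (((N : ℝ) + 1) * (-π))..(((N : ℝ) + 1) * π), H x)
              = (N + 1 : ℤ) • ∫ x in (-π)..π, H x := by
            rw [show ((N : ℝ) + 1) * π = ((N : ℝ) + 1) * (-π) + (N + 1 : ℤ) • (2 * π) by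
              push_cast [zsmul_eq_mul]; ring,
              (hHper u).intervalIntegral_add_zsmul_eq (N + 1 : ℤ) (((N : ℝ) + 1) * (-π))
                (fun t₁ t₂ => (hHcont u).intervalIntegrable t₁ t₂),
              (hHper u).intervalIntegral_add_eq (((N : ℝ) + 1) * (-π)) (-π),
              show -π + 2 * π = π by ring]
          rw [e]
      _ = G u := by
          rw [zsmul_eq_mul, smul_eq_mul, show ((N + 1 : ℤ) : ℝ) = (N : ℝ) + 1 by push_cast; ring,
            ← mul_assoc, inv_mul_cancel₀ hn0, one_mul]
  rw [setIntegral_congr_fun measurableSet_Ioi hinner]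
  have hcov := integral_comp_rpow_Ioi (fun u : ℝ => (((N : ℝ) + 1))⁻¹ * (u * G u))
    (p := ((N : ℝ) + 1)) hn0
  have hlhs : EqOn
      (fun x : ℝ => (|(N : ℝ) + 1| * x ^ (((N : ℝ) + 1) - 1)) •
        ((((N : ℝ) + 1))⁻¹ * (x ^ ((N : ℝ) + 1) * G (x ^ ((N : ℝ) + 1)))))
      (fun x : ℝ => x ^ (2 * N + 1) * G (x ^ (N + 1))) (Ioi 0) := by
    intro x hx
    have hx0 : (0:ℝ) < x := hx
    simp only [smul_eq_mul]
    rw [show ((N : ℝ) + 1) - 1 = ((N : ℕ) : ℝ) by push_cast; ring]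
    rw [show ((N : ℝ) + 1) = ((N + 1 : ℕ) : ℝ) by push_cast; ring]
    rw [Real.rpow_natCast, Real.rpow_natCast]
    rw [abs_of_pos (by positivity : (0:ℝ) < ((N + 1 : ℕ) : ℝ))]
    have hne : ((N + 1 : ℕ) : ℝ) ≠ 0 := by positivity
    field_simp
    ring
  rw [← setIntegral_congr_fun measurableSet_Ioi hlhs, hcov]
  simp only [MeasureTheory.integral_const_mul]
  have hB : (∫ u in Ioi (0:ℝ), u * G u) = 0 := by
    have h0 := planarP_zero hc P
    rw [← Complex.integral_comp_polarCoord_symm (fun w => hfun c (‖w - P‖ ^ 2)),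
      polarCoord_target] at h0
    have hInt2 : IntegrableOn
        (fun p : ℝ × ℝ => p.1 • hfun c (‖Complex.polarCoord.symm p - P‖ ^ 2))
        (Ioi 0 ×ˢ Ioo (-π) π) (volume.prod volume) := by
      rw [← Measure.volume_eq_prod]
      have := intProd hc P 0 (fun p => p.2) continuous_snd
      simpa [pow_one, smul_eq_mul] using this
    rw [Measure.volume_eq_prod, setIntegral_prod _ hInt2] at h0
    have hinner2 : EqOn
        (fun u : ℝ => ∫ φ in Ioo (-π) π,
          (u • hfun c (‖Complex.polarCoord.symm (u, φ) - P‖ ^ 2)))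
        (fun u : ℝ => u * G u) (Ioi 0) := by
      intro u _
      simp only [smul_eq_mul]
      rw [MeasureTheory.integral_const_mul]
      congr 1
      exact inner_eq u
    rw [setIntegral_congr_fun measurableSet_Ioi hinner2] at h0
    exact h0
  rw [hB, mul_zero]

theorem stmt8 (N : ℕ) (hN : 0 < N) (lam : ℝ) (hlam : 0 < lam) (μ : ℝ) (P : ℂ)
    (c : ℝ) (hc : c = Real.exp μ / lam) :
    (∫ z : ℂ,
        (1 - c * ‖z ^ (N + 1) - P‖ ^ 2) * ‖z‖ ^ (2 * N)
          / (1 + c * ‖z ^ (N + 1) - P‖ ^ 2) ^ 3) = 0 := by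
  have hc0 : 0 < c := by rw [hc]; positivity
  exact key hc0 P N
end

section
/- Let N be a positive integer, c > 0, and P ∈ ℂ. Then ∫_{ℝ²} c(z^{N+1} − P)|z|^{2N} / (1 + c|z^{N+1} − P|²)³ dz = 0 (as a complex-valued integral), and the same holds with z^{N+1} − P replaced by its complex conjugate. -/
open MeasureTheory Set
open scoped Real

noncomputable section

namespace Stmt9Aux

/-- The base odd integrable function. -/
def gz (c : ℝ) : ℂ → ℂ :=
  fun w => (c : ℂ) * w / (((1 + c * ‖w‖ ^ 2 : ℝ) : ℂ)) ^ 3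

variable {c : ℝ}

lemma one_add_pos (hc : 0 < c) (t : ℝ) : 0 < 1 + c * t ^ 2 := by positivity

lemma gz_cont (hc : 0 < c) : Continuous (gz c) := by
  apply Continuous.div
  · exact continuous_const.mul continuous_id
  · exact (Complex.continuous_ofReal.comp
      (continuous_const.add (continuous_const.mul (continuous_norm.pow 2)))).pow 3
  · intro w
    exact pow_ne_zero _ (Complex.ofReal_ne_zero.mpr (one_add_pos hc ‖w‖).ne')

lemma gz_norm (hc : 0 < c) (w : ℂ) :
    ‖gz c w‖ = c * ‖w‖ / (1 + c * ‖w‖ ^ 2) ^ 3 := by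
  unfold gz
  rw [norm_div, norm_mul, norm_pow, Complex.norm_real,
    Complex.norm_real, Real.norm_eq_abs, Real.norm_eq_abs, abs_of_pos hc,
    abs_of_pos (one_add_pos hc ‖w‖)]

lemma gz_integrable (hc : 0 < c) : Integrable (gz c) := by
  have hmaj : Integrable (fun w : ℂ =>
      (2 * Real.sqrt c * (1 + c⁻¹) ^ 2) * (1 + ‖w‖) ^ (-(4 : ℝ))) := by
    refine Integrable.const_mul ?_ _
    refine integrable_one_add_norm (E := ℂ) (μ := volume) ?_
    rw [Complex.finrank_real_complex]; norm_num
  refine Integrable.mono' hmaj (gz_cont hc).aestronglyMeasurable ?_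
  filter_upwards with w
  rw [gz_norm hc]
  set t := ‖w‖ with htdef
  have ht0 : 0 ≤ t := norm_nonneg w
  have hw : ‖w‖ = t := rfl
  have hr4 : ((1 : ℝ) + t) ^ (-(4 : ℝ)) = ((1 + t) ^ (4 : ℕ))⁻¹ := by
    rw [Real.rpow_neg (by positivity), ← Real.rpow_natCast]; norm_num
  rw [hr4, ← div_eq_mul_inv]
  have hD : 0 < 1 + c * t ^ 2 := one_add_pos hc t
  rw [div_le_div_iff₀ (by positivity) (by positivity)]
  have hs : 0 < Real.sqrt c := Real.sqrt_pos.mpr hc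
  have hsq : Real.sqrt c * Real.sqrt c = c := Real.mul_self_sqrt hc.le
  have h1 : 2 * Real.sqrt c * t ≤ 1 + c * t ^ 2 := by
    nlinarith [sq_nonneg (1 - Real.sqrt c * t)]
  have h3 : 1 + t ^ 2 ≤ (1 + c⁻¹) * (1 + c * t ^ 2) := by
    have hcc : c⁻¹ * (c * t ^ 2) = t ^ 2 := by field_simp
    have hc' : 0 < c⁻¹ := inv_pos.mpr hc
    nlinarith [mul_nonneg hc.le (sq_nonneg t)]
  have h2 : (1 + t) ^ 2 ≤ 2 * (1 + t ^ 2) := by nlinarith [sq_nonneg (1 - t)]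
  have h4 : (1 + t) ^ 4 ≤ 4 * ((1 + c⁻¹) * (1 + c * t ^ 2)) ^ 2 := by
    have e1 : ((1 + t) ^ 2) ^ 2 ≤ (2 * ((1 + c⁻¹) * (1 + c * t ^ 2))) ^ 2 := by
      apply pow_le_pow_left₀ (by positivity)
      calc (1 + t) ^ 2 ≤ 2 * (1 + t ^ 2) := h2
        _ ≤ 2 * ((1 + c⁻¹) * (1 + c * t ^ 2)) := by linarith
    calc (1 + t) ^ 4 = ((1 + t) ^ 2) ^ 2 := by ring
      _ ≤ (2 * ((1 + c⁻¹) * (1 + c * t ^ 2))) ^ 2 := e1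
      _ = 4 * ((1 + c⁻¹) * (1 + c * t ^ 2)) ^ 2 := by ring
  have h5 : c * t ≤ Real.sqrt c * (1 + c * t ^ 2) / 2 := by nlinarith
  calc c * t * (1 + t) ^ 4
      ≤ c * t * (4 * ((1 + c⁻¹) * (1 + c * t ^ 2)) ^ 2) := by
        apply mul_le_mul_of_nonneg_left h4 (by positivity)
    _ = (c * t) * (4 * ((1 + c⁻¹) ^ 2 * (1 + c * t ^ 2) ^ 2)) := by ring
    _ ≤ (Real.sqrt c * (1 + c * t ^ 2) / 2) * (4 * ((1 + c⁻¹) ^ 2 * (1 + c * t ^ 2) ^ 2)) := by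
        apply mul_le_mul_of_nonneg_right h5 (by positivity)
    _ = 2 * Real.sqrt c * (1 + c⁻¹) ^ 2 * (1 + c * t ^ 2) ^ 3 := by ring

lemma gz_neg (w : ℂ) : gz c (-w) = - gz c w := by
  unfold gz
  rw [norm_neg, mul_neg, neg_div]

lemma gz_integral_zero (hc : 0 < c) : (∫ w : ℂ, gz c w) = 0 := by
  have h : (∫ w : ℂ, gz c (-w)) = ∫ w : ℂ, gz c w := integral_neg_eq_self (gz c) volume
  simp_rw [gz_neg, integral_neg] at h
  linear_combination (-1/2 : ℂ) * h

lemma key (hc : 0 < c) (ω P : ℂ) (hω : ‖ω‖ = 1) :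
    Integrable (fun w : ℂ => gz c (w * ω - P)) ∧ (∫ w : ℂ, gz c (w * ω - P)) = 0 := by
  have hω0 : ω ≠ 0 := by
    intro h; rw [h] at hω; simp at hω
  have hrw : (fun w : ℂ => gz c (w * ω - P)) = fun w => ω * gz c (w - P * ω⁻¹) := by
    funext w
    have h1 : w * ω - P = ω * (w - P * ω⁻¹) := by field_simp
    rw [h1]
    unfold gz
    rw [norm_mul, hω, one_mul]
    ring
  rw [hrw]
  constructor
  · exact ((gz_integrable hc).comp_sub_right (P * ω⁻¹)).const_mul ω
  · rw [integral_const_mul, integral_sub_right_eq_self (fun w => gz c w) (P * ω⁻¹),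
      gz_integral_zero hc, mul_zero]

lemma polar_symm_exp (p : ℝ × ℝ) :
    Complex.polarCoord.symm p = (p.1 : ℂ) * Complex.exp (p.2 * Complex.I) := by
  rw [Complex.polarCoord_symm_apply, Complex.exp_mul_I, ← Complex.ofReal_cos,
    ← Complex.ofReal_sin]

lemma polar_integrableOn {G : ℂ → ℂ} (hG : Integrable G) :
    IntegrableOn (fun p : ℝ × ℝ => p.1 • G (Complex.polarCoord.symm p)) polarCoord.target := by
  set B : ℝ × ℝ → ℝ × ℝ →L[ℝ] ℝ × ℝ := fun p =>
    LinearMap.toContinuousLinearMap (Matrix.toLin (Module.Basis.finTwoProd ℝ) (Module.Basis.finTwoProd ℝ)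
      !![Real.cos p.2, -p.1 * Real.sin p.2; Real.sin p.2, p.1 * Real.cos p.2]) with hB
  have hd : ∀ p ∈ polarCoord.target, HasFDerivWithinAt polarCoord.symm (B p) polarCoord.target p :=
    fun p _ => (hasFDerivAt_polarCoord_symm p).hasFDerivWithinAt
  have B_det : ∀ p, (B p).det = p.1 := by
    intro p
    conv_rhs => rw [← one_mul p.1, ← Real.cos_sq_add_sin_sq p.2]
    simp only [hB, neg_mul, LinearMap.det_toContinuousLinearMap, LinearMap.det_toLin,
      Matrix.det_fin_two_of, sub_neg_eq_add]
    ring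
  have hinj : InjOn polarCoord.symm polarCoord.target := polarCoord.symm.injOn
  have himg : polarCoord.symm '' polarCoord.target = polarCoord.source := by
    have := polarCoord.symm.image_source_eq_target
    simpa using this
  have hmeas : MeasurableSet polarCoord.target := polarCoord.open_target.measurableSet
  set F : ℝ × ℝ → ℂ := fun q => G (q.1 + q.2 * Complex.I) with hF
  have hFint : IntegrableOn F polarCoord.source := by
    have h1 : Integrable (G ∘ Complex.measurableEquivRealProd.symm) :=
      ((Complex.volume_preserving_equiv_real_prod.symm _).integrable_comp_emb
        Complex.measurableEquivRealProd.symm.measurableEmbedding).mpr hG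
    have h2 : (G ∘ Complex.measurableEquivRealProd.symm) = F := by
      funext p
      rw [hF]
      simp only [Function.comp_apply, Complex.measurableEquivRealProd_symm_apply]
      congr 1
      exact Complex.mk_eq_add_mul_I p.1 p.2
    rw [h2] at h1
    exact h1.integrableOn
  have h3 := (integrableOn_image_iff_integrableOn_abs_det_fderiv_smul volume hmeas hd hinj F).mp
    (by rw [himg]; exact hFint)
  refine h3.congr_fun ?_ hmeas
  intro p hp
  rw [polarCoord_target] at hp
  have hp1 : 0 < p.1 := hp.1
  dsimp only
  rw [B_det, abs_of_pos hp1]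
  congr 1
  rw [hF, polar_symm_exp p]
  simp only [polarCoord_symm_apply]
  congr 1
  rw [Complex.exp_mul_I, ← Complex.ofReal_cos, ← Complex.ofReal_sin]
  push_cast
  ring
/-- The polar-coordinates integrand. -/
def u (c : ℝ) (P : ℂ) : ℝ × ℝ → ℂ :=
  fun p => p.1 • gz c ((p.1 : ℂ) * Complex.exp ((p.2 : ℝ) * Complex.I) - P)

lemma prod_singleton_null (a : ℝ) (s : Set ℝ) :
    volume (s ×ˢ ({a} : Set ℝ)) = 0 := by
  rw [show (volume : Measure (ℝ × ℝ)) = (volume : Measure ℝ).prod volume from rfl,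
    Measure.prod_prod]
  simp

lemma ae_Ioo_Ioc {α β : ℝ} (hab : α < β) (s : Set ℝ) :
    (s ×ˢ Ioo α β : Set (ℝ × ℝ)) =ᵐ[volume] (s ×ˢ Ioc α β : Set (ℝ × ℝ)) := by
  have hsub : (s ×ˢ Ioc α β : Set (ℝ × ℝ)) \ (s ×ˢ Ioo α β) ⊆ s ×ˢ ({β} : Set ℝ) := by
    rintro ⟨x, y⟩ ⟨⟨hx, hy⟩, hn⟩
    refine ⟨hx, ?_⟩
    simp only [mem_singleton_iff]
    by_contra hne
    exact hn ⟨hx, hy.1, lt_of_le_of_ne hy.2 hne⟩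
  have h1 : volume ((s ×ˢ Ioc α β : Set (ℝ × ℝ)) \ (s ×ˢ Ioo α β)) = 0 :=
    measure_mono_null hsub (prod_singleton_null β s)
  have h2 : volume ((s ×ˢ Ioo α β : Set (ℝ × ℝ)) \ (s ×ˢ Ioc α β)) = 0 := by
    have : (s ×ˢ Ioo α β : Set (ℝ × ℝ)) \ (s ×ˢ Ioc α β) = ∅ := by
      rw [diff_eq_empty]
      exact prod_mono_right Ioo_subset_Ioc_self
    simp [this]
  rw [MeasureTheory.ae_eq_set]
  exact ⟨h2, h1⟩

lemma window (hc : 0 < c) (P : ℂ) (b : ℝ) :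
    IntegrableOn (u c P) (Ioi (0 : ℝ) ×ˢ Ioc b (b + 2 * π)) ∧
      (∫ p in Ioi (0 : ℝ) ×ˢ Ioc b (b + 2 * π), u c P p) = 0 := by
  set ω : ℂ := Complex.exp (((b + π : ℝ) : ℂ) * Complex.I) with hωdef
  have hω1 : ‖ω‖ = 1 := Complex.norm_exp_ofReal_mul_I _
  obtain ⟨hKint, hKzero⟩ := key hc ω P hω1
  set G : ℂ → ℂ := fun w => gz c (w * ω - P) with hG
  have hpolar : IntegrableOn (fun p : ℝ × ℝ => p.1 • G (Complex.polarCoord.symm p))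
      polarCoord.target := polar_integrableOn hKint
  have hae := ae_Ioo_Ioc (by linarith [Real.pi_pos] : -π < π) (Ioi (0 : ℝ))
  set v : ℝ × ℝ := ((0 : ℝ), b + π) with hv
  have hpre : (fun x : ℝ × ℝ => x + v) ⁻¹' (Ioi 0 ×ˢ Ioc b (b + 2 * π))
      = Ioi (0 : ℝ) ×ˢ Ioc (-π) π := by
    ext ⟨x, y⟩
    simp only [mem_preimage, Prod.mk_add_mk, hv, mem_prod, mem_Ioi, mem_Ioc]
    constructor
    · rintro ⟨h1, h2, h3⟩
      exact ⟨by linarith, by linarith, by linarith⟩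
    · rintro ⟨h1, h2, h3⟩
      exact ⟨by linarith, by linarith, by linarith⟩
  have hcomp : (fun p : ℝ × ℝ => u c P (p + v))
      = fun p : ℝ × ℝ => p.1 • G (Complex.polarCoord.symm p) := by
    funext p
    rw [polar_symm_exp p]
    show (p.1 + 0) • gz c ((((p.1 + 0 : ℝ)) : ℂ)
        * Complex.exp (((p.2 + (b + π) : ℝ) : ℂ) * Complex.I) - P) = _
    rw [add_zero, hG]
    have he : (((p.2 + (b + π) : ℝ)) : ℂ) * Complex.I
        = ((p.2 : ℝ) : ℂ) * Complex.I + ((b + π : ℝ) : ℂ) * Complex.I := by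
      push_cast; ring
    rw [he, Complex.exp_add, ← hωdef]
    dsimp only
    congr 2
    ring
  have mp := measurePreserving_add_right (volume : Measure (ℝ × ℝ)) v
  have emb : MeasurableEmbedding (fun x : ℝ × ℝ => x + v) :=
    (MeasurableEquiv.addRight v).measurableEmbedding
  have h1 : IntegrableOn (fun p : ℝ × ℝ => p.1 • G (Complex.polarCoord.symm p))
      (Ioi (0 : ℝ) ×ˢ Ioc (-π) π) := by
    rw [IntegrableOn, ← Measure.restrict_congr_set hae]
    rw [polarCoord_target] at hpolar
    exact hpolar
  constructor
  · have h2 : IntegrableOn ((u c P) ∘ (fun x : ℝ × ℝ => x + v))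
        ((fun x : ℝ × ℝ => x + v) ⁻¹' (Ioi 0 ×ˢ Ioc b (b + 2 * π))) := by
      rw [hpre]
      have : (u c P) ∘ (fun x : ℝ × ℝ => x + v)
          = fun p : ℝ × ℝ => p.1 • G (Complex.polarCoord.symm p) := hcomp
      rw [this]
      exact h1
    exact (mp.integrableOn_comp_preimage emb).mp h2
  · have h3 := mp.setIntegral_preimage_emb emb (u c P) (Ioi 0 ×ˢ Ioc b (b + 2 * π))
    rw [hpre] at h3
    rw [← h3]
    have h4 : (∫ x in Ioi (0 : ℝ) ×ˢ Ioc (-π) π, u c P (x + v))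
        = ∫ x in Ioi (0 : ℝ) ×ˢ Ioc (-π) π, x.1 • G (Complex.polarCoord.symm x) := by
      congr 1
    rw [h4, ← setIntegral_congr_set hae]
    have h5 : (∫ x in Ioi (0 : ℝ) ×ˢ Ioo (-π) π, x.1 • G (Complex.polarCoord.symm x))
        = ∫ z : ℂ, G z := by
      rw [← Complex.integral_comp_polarCoord_symm G, polarCoord_target]
    rw [h5]
    exact hKzero
lemma windows (hc : 0 < c) (P : ℂ) (a : ℝ) (k : ℕ) :
    IntegrableOn (u c P) (Ioi (0 : ℝ) ×ˢ Ioc a (a + 2 * π * k)) ∧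
      (∫ p in Ioi (0 : ℝ) ×ˢ Ioc a (a + 2 * π * k), u c P p) = 0 := by
  induction k with
  | zero =>
    simp only [Nat.cast_zero, mul_zero, add_zero, Ioc_self, prod_empty]
    exact ⟨integrableOn_empty, by simp⟩
  | succ k ih =>
    have hsplit : Ioc a (a + 2 * π * (k + 1 : ℕ))
        = Ioc a (a + 2 * π * k) ∪ Ioc (a + 2 * π * k) ((a + 2 * π * k) + 2 * π) := by
      rw [Set.Ioc_union_Ioc_eq_Ioc (by nlinarith [Real.pi_pos]) (by nlinarith [Real.pi_pos])]
      congr 1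
      push_cast
      ring
    obtain ⟨hwint, hwzero⟩ := window hc P (a + 2 * π * k)
    have hdisj : Disjoint (Ioi (0 : ℝ) ×ˢ Ioc a (a + 2 * π * k))
        (Ioi (0 : ℝ) ×ˢ Ioc (a + 2 * π * k) ((a + 2 * π * k) + 2 * π)) := by
      rw [Set.disjoint_left]
      rintro ⟨x, y⟩ ⟨_, hy⟩ ⟨_, hy'⟩
      exact absurd hy'.1 (not_lt.mpr hy.2)
    have hmeas2 : MeasurableSet
        (Ioi (0 : ℝ) ×ˢ Ioc (a + 2 * π * k) ((a + 2 * π * k) + 2 * π)) :=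
      measurableSet_Ioi.prod measurableSet_Ioc
    rw [hsplit, prod_union]
    refine ⟨ih.1.union hwint, ?_⟩
    rw [setIntegral_union hdisj hmeas2 ih.1 hwint, ih.2, hwzero, add_zero]

theorem first_integral (N : ℕ) (hc : 0 < c) (P : ℂ) :
    (∫ z : ℂ, ((‖z‖ ^ (2 * N) : ℝ) : ℂ) * gz c (z ^ (N + 1) - P)) = 0 := by
  set n : ℕ := N + 1 with hn
  have hn0 : (n : ℝ) ≠ 0 := by positivity
  have hnpos : (0 : ℝ) < n := by positivity
  -- pass to real smul
  have hsmul : ∀ z : ℂ, ((‖z‖ ^ (2 * N) : ℝ) : ℂ) * gz c (z ^ n - P)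
      = (‖z‖ ^ (2 * N) : ℝ) • gz c (z ^ n - P) := by
    intro z; rw [Complex.real_smul]
  simp_rw [hsmul]
  rw [← Complex.integral_comp_polarCoord_symm (fun z : ℂ =>
    (‖z‖ ^ (2 * N) : ℝ) • gz c (z ^ n - P))]
  -- change of variables Φ p = (p.1 ^ n, n * p.2)
  set Φ : ℝ × ℝ → ℝ × ℝ := fun q => (q.1 ^ n, (n : ℝ) * q.2) with hΦ
  set B : ℝ × ℝ → ℝ × ℝ →L[ℝ] ℝ × ℝ := fun p =>
    LinearMap.toContinuousLinearMap (Matrix.toLin (Module.Basis.finTwoProd ℝ) (Module.Basis.finTwoProd ℝ)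
      !![(n : ℝ) * p.1 ^ (n - 1), 0; 0, (n : ℝ)]) with hB
  have hder : ∀ p : ℝ × ℝ, HasFDerivAt Φ (B p) p := by
    intro p
    simp only [hB, hΦ]
    rw [Matrix.toLin_finTwoProd_toContinuousLinearMap]
    have d1 : HasFDerivAt (fun q : ℝ × ℝ => q.1 ^ n)
        (((n : ℝ) * p.1 ^ (n - 1)) • ContinuousLinearMap.fst ℝ ℝ ℝ) p := by
      have := (hasDerivAt_pow n p.1).comp_hasFDerivAt p
        (hasFDerivAt_fst : HasFDerivAt Prod.fst (ContinuousLinearMap.fst ℝ ℝ ℝ) p)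
      exact this
    have d2 : HasFDerivAt (fun q : ℝ × ℝ => (n : ℝ) * q.2)
        ((n : ℝ) • ContinuousLinearMap.snd ℝ ℝ ℝ) p := by
      have := ((n : ℝ) • ContinuousLinearMap.snd ℝ ℝ ℝ).hasFDerivAt (x := p)
      exact this
    have := d1.prodMk d2
    exact this.congr_fderiv (by simp)
  have hmeas : MeasurableSet polarCoord.target := polarCoord.open_target.measurableSet
  have hd' : ∀ p ∈ polarCoord.target, HasFDerivWithinAt Φ (B p) polarCoord.target p :=
    fun p _ => (hder p).hasFDerivWithinAt
  have hdet : ∀ p : ℝ × ℝ, (B p).det = (n : ℝ) ^ 2 * p.1 ^ (n - 1) := by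
    intro p
    rw [hB]
    simp only [LinearMap.det_toContinuousLinearMap, LinearMap.det_toLin,
      Matrix.det_fin_two_of]
    ring
  have hinj : InjOn Φ polarCoord.target := by
    rintro ⟨r, θ⟩ hp ⟨r', θ'⟩ hp' heq
    rw [polarCoord_target] at hp hp'
    obtain ⟨h1, h2⟩ := Prod.ext_iff.mp heq
    simp only [hΦ] at h1 h2
    have hr : r = r' := by
      have hmono := pow_left_strictMonoOn₀ (M₀ := ℝ) (n := n) (by omega : n ≠ 0)
      exact hmono.injOn (show (0:ℝ) ≤ r from le_of_lt hp.1) (show (0:ℝ) ≤ r' from le_of_lt hp'.1) h1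
    have hθ : θ = θ' := mul_left_cancel₀ hn0 h2
    simp [hr, hθ]
  have himg : Φ '' polarCoord.target = Ioi (0 : ℝ) ×ˢ Ioo (-((n : ℝ) * π)) ((n : ℝ) * π) := by
    rw [polarCoord_target, hΦ]
    rw [← Set.prod_image_image_eq (m₁ := fun x : ℝ => x ^ n) (m₂ := fun y : ℝ => (n : ℝ) * y)]
    have h1 : (fun x : ℝ => x ^ n) '' Ioi 0 = Ioi 0 := by
      ext y
      constructor
      · rintro ⟨x, hx, rfl⟩
        exact pow_pos (show (0:ℝ) < x from hx) n
      · intro hy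
        refine ⟨y ^ ((n : ℝ)⁻¹), Real.rpow_pos_of_pos hy _, ?_⟩
        show (y ^ ((n : ℝ)⁻¹)) ^ n = y
        rw [← Real.rpow_natCast (y ^ ((n : ℝ)⁻¹)) n, ← Real.rpow_mul (le_of_lt hy),
          inv_mul_cancel₀ hn0, Real.rpow_one]
    have h2 : (fun y : ℝ => (n : ℝ) * y) '' Ioo (-π) π
        = Ioo (-((n : ℝ) * π)) ((n : ℝ) * π) := by
      rw [Set.image_mul_left_Ioo hnpos]
      congr 1
      ring
    rw [h1, h2]
  have hcov := integral_image_eq_integral_abs_det_fderiv_smul volume hmeas hd' hinj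
    (fun q : ℝ × ℝ => (q.1 / ((n : ℝ) ^ 2)) •
      gz c ((q.1 : ℂ) * Complex.exp ((q.2 : ℝ) * Complex.I) - P))
  rw [himg] at hcov
  have hcong : ∀ p ∈ polarCoord.target,
      p.1 • ((‖Complex.polarCoord.symm p‖ ^ (2 * N) : ℝ)
        • gz c ((Complex.polarCoord.symm p) ^ n - P))
      = |(B p).det| • ((Φ p).1 / ((n : ℝ) ^ 2)) •
          gz c (((Φ p).1 : ℂ) * Complex.exp (((Φ p).2 : ℝ) * Complex.I) - P) := by
    rintro ⟨r, θ⟩ hp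
    rw [polarCoord_target] at hp
    have hr : (0 : ℝ) < r := hp.1
    have habs : ‖Complex.polarCoord.symm (r, θ)‖ = r := by
      rw [Complex.norm_polarCoord_symm, abs_of_pos hr]
    have hpow : (Complex.polarCoord.symm (r, θ)) ^ n
        = ((r ^ n : ℝ) : ℂ) * Complex.exp ((((n : ℝ) * θ : ℝ)) * Complex.I) := by
      rw [polar_symm_exp]
      rw [mul_pow, ← Complex.exp_nat_mul]
      push_cast
      ring_nf
    rw [habs, hpow, hdet]
    simp only [hΦ]
    rw [abs_of_pos (by positivity : (0 : ℝ) < (n : ℝ) ^ 2 * r ^ (n - 1))]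
    rw [smul_smul, smul_smul]
    congr 1
    have hnn : n - 1 = N := by omega
    rw [hnn, hn]
    field_simp
    ring
  rw [setIntegral_congr_fun hmeas hcong, ← hcov]
  -- now reduce to windows
  have hF : ∀ p : ℝ × ℝ, (p.1 / ((n : ℝ) ^ 2)) •
      gz c ((p.1 : ℂ) * Complex.exp ((p.2 : ℝ) * Complex.I) - P)
      = (((n : ℝ) ^ 2)⁻¹) • u c P p := by
    intro p
    simp only [u]
    rw [smul_smul]
    congr 1
    rw [div_eq_mul_inv, mul_comm]
  simp_rw [hF]
  rw [integral_smul]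
  have haen := ae_Ioo_Ioc (by nlinarith [Real.pi_pos] : -((n : ℝ) * π) < (n : ℝ) * π)
    (Ioi (0 : ℝ))
  rw [setIntegral_congr_set haen]
  have hwin := (windows hc P (-((n : ℝ) * π)) n).2
  have hend : -((n : ℝ) * π) + 2 * π * n = (n : ℝ) * π := by ring
  rw [hend] at hwin
  rw [hwin, smul_zero]

end Stmt9Aux

end

theorem stmt9 (N : ℕ) (hN : 0 < N) (c : ℝ) (hc : 0 < c) (P : ℂ) :
    (∫ z : ℂ,
        ((c : ℂ) * (z ^ (N + 1) - P) * ((‖z‖ ^ (2 * N) : ℝ) : ℂ)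
          / (((1 + c * ‖z ^ (N + 1) - P‖ ^ 2 : ℝ) : ℂ)) ^ 3)) = 0 ∧
    (∫ z : ℂ,
        ((c : ℂ) * (starRingEnd ℂ (z ^ (N + 1) - P)) * ((‖z‖ ^ (2 * N) : ℝ) : ℂ)
          / (((1 + c * ‖z ^ (N + 1) - P‖ ^ 2 : ℝ) : ℂ)) ^ 3)) = 0 := by
  have hrw : ∀ z : ℂ,
      ((c : ℂ) * (z ^ (N + 1) - P) * ((‖z‖ ^ (2 * N) : ℝ) : ℂ)
          / (((1 + c * ‖z ^ (N + 1) - P‖ ^ 2 : ℝ) : ℂ)) ^ 3)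
        = ((‖z‖ ^ (2 * N) : ℝ) : ℂ) * Stmt9Aux.gz c (z ^ (N + 1) - P) := by
    intro z
    unfold Stmt9Aux.gz
    ring
  have hfirst : (∫ z : ℂ,
      ((c : ℂ) * (z ^ (N + 1) - P) * ((‖z‖ ^ (2 * N) : ℝ) : ℂ)
        / (((1 + c * ‖z ^ (N + 1) - P‖ ^ 2 : ℝ) : ℂ)) ^ 3)) = 0 := by
    simp_rw [hrw]
    exact Stmt9Aux.first_integral N hc P
  refine ⟨hfirst, ?_⟩
  have hconj : ∀ z : ℂ,
      ((c : ℂ) * (starRingEnd ℂ (z ^ (N + 1) - P)) * ((‖z‖ ^ (2 * N) : ℝ) : ℂ)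
          / (((1 + c * ‖z ^ (N + 1) - P‖ ^ 2 : ℝ) : ℂ)) ^ 3)
        = starRingEnd ℂ ((c : ℂ) * (z ^ (N + 1) - P) * ((‖z‖ ^ (2 * N) : ℝ) : ℂ)
          / (((1 + c * ‖z ^ (N + 1) - P‖ ^ 2 : ℝ) : ℂ)) ^ 3) := by
    intro z
    rw [map_div₀, map_mul, map_mul, map_pow, Complex.conj_ofReal, Complex.conj_ofReal,
      Complex.conj_ofReal]
  simp_rw [hconj]
  rw [integral_conj, hfirst, map_zero]
end

section
/- Let N be a positive integer, μ ∈ ℝ, c > 0, and V(y) = μ − 2 log(1 + c|y^{N+1} − 1|²). Then there is a constant C (depending on N, μ, c) such that for all |y| ≥ 2: |V(y) − (−μ − 4(N+1) log|y| + log(e^{2μ}/c²))| ≤ C |y|^{-(N+1)}. -/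
lemma log_abs_bound' {t : ℝ} (ht : 9/16 ≤ t) : |Real.log t| ≤ (16/9) * |t - 1| := by
  have ht0 : 0 < t := by linarith
  rcases le_or_gt 1 t with h | h
  · rw [abs_of_nonneg (Real.log_nonneg h), abs_of_nonneg (by linarith)]
    have := Real.log_le_sub_one_of_pos ht0
    linarith
  · rw [abs_of_nonpos (Real.log_nonpos ht0.le h.le), abs_of_neg (by linarith)]
    have h2 := Real.log_le_sub_one_of_pos (inv_pos.mpr ht0)
    rw [Real.log_inv] at h2
    have hmul : (t⁻¹ - 1) * t = 1 - t := by field_simp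
    nlinarith [mul_pos ht0 ht0]

theorem stmt15 (N : ℕ) (hN : 0 < N) (μ : ℝ) (c : ℝ) (hc : 0 < c)
    (V : ℂ → ℝ)
    (hV : V = fun y => μ - 2 * Real.log (1 + c * ‖y ^ (N + 1) - 1‖ ^ 2)) :
    ∃ C : ℝ, ∀ y : ℂ, 2 ≤ ‖y‖ →
      |V y - (-μ - 4 * (N + 1) * Real.log (‖y‖)
          + Real.log (Real.exp (2 * μ) / c ^ 2))|
        ≤ C / ‖y‖ ^ (N + 1) := by
  subst hV
  refine ⟨(32/9) * (1/(4*c) + 3), fun y hy => ?_⟩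
  set r := ‖y‖ with hr
  set R : ℝ := r ^ (N + 1) with hRdef
  have hR4 : (4:ℝ) ≤ R := by
    calc (4:ℝ) = 2 ^ 2 := by norm_num
    _ ≤ 2 ^ (N+1) := by
        apply pow_le_pow_right₀ (by norm_num)
        omega
    _ ≤ r ^ (N+1) := by
        apply pow_le_pow_left₀ (by norm_num) hy
  have hR0 : (0:ℝ) < R := by linarith
  set A : ℝ := ‖y ^ (N+1) - 1‖ with hAdef
  have hA0 : 0 ≤ A := norm_nonneg _
  have hwR : ‖y ^ (N+1)‖ = R := by rw [norm_pow]
  have hAu : A ≤ R + 1 := by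
    have := norm_sub_le (y ^ (N+1)) 1
    simpa [hwR] using this
  have hAl : R - 1 ≤ A := by
    have h := abs_norm_sub_norm_le (y ^ (N+1)) (1 : ℂ)
    simp only [hwR, norm_one] at h
    linarith [(abs_le.mp h).2]
  have hnum0 : (0:ℝ) < 1 + c * A ^ 2 := by positivity
  have hd : (0:ℝ) < c * R ^ 2 := by positivity
  set t : ℝ := (1 + c * A ^ 2) / (c * R ^ 2) with htdef
  have ht1 : t * (c * R ^ 2) = 1 + c * A ^ 2 := div_mul_cancel₀ _ hd.ne'
  have ht916 : 9/16 ≤ t := by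
    have hA34 : 3/4 * R ≤ A := by linarith
    nlinarith [mul_le_mul hA34 hA34 (by linarith) hA0, mul_pos hc (mul_pos hR0 hR0)]
  have h1 : (t - 1) * R ≤ 1/(4*c) + 3 := by
    have e : ((t - 1) * R) * (c * R) = 1 + c * A ^ 2 - c * R ^ 2 := by
      linear_combination ht1
    have hc4R : (1/(4*c)) * (c * R) = R/4 := by field_simp
    nlinarith [hc4R, mul_le_mul_of_nonneg_left
        (mul_le_mul hAu hAu hA0 (by linarith : (0:ℝ) ≤ R + 1)) hc.le,
      mul_pos hc hR0, mul_nonneg hc.le (by linarith : (0:ℝ) ≤ R - 4)]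
  have h2 : (1 - t) * R ≤ 1/(4*c) + 3 := by
    have e : ((1 - t) * R) * (c * R) = c * R ^ 2 - 1 - c * A ^ 2 := by
      linear_combination -ht1
    have hc4R : (1/(4*c)) * (c * R) = R/4 := by field_simp
    nlinarith [hc4R, mul_le_mul_of_nonneg_left
        (mul_le_mul hAl hAl (by linarith : (0:ℝ) ≤ R - 1) hA0) hc.le,
      mul_pos hc hR0, mul_nonneg hc.le (by linarith : (0:ℝ) ≤ R - 4)]
  have hsub : |t - 1| ≤ (1/(4*c) + 3) / R := by
    rw [abs_le]
    constructor
    · rw [neg_le, neg_sub, le_div_iff₀ hR0]; exact h2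
    · rw [le_div_iff₀ hR0]; exact h1
  have hlog : |Real.log t| ≤ (16/9) * ((1/(4*c) + 3) / R) := by
    calc |Real.log t| ≤ (16/9) * |t - 1| := log_abs_bound' ht916
    _ ≤ (16/9) * ((1/(4*c) + 3) / R) := by
        apply mul_le_mul_of_nonneg_left hsub (by norm_num)
  have hEq : (μ - 2 * Real.log (1 + c * A ^ 2)) -
      (-μ - 4 * (N + 1) * Real.log r + Real.log (Real.exp (2 * μ) / c ^ 2))
      = -2 * Real.log t := by
    rw [htdef, Real.log_div hnum0.ne' hd.ne', Real.log_mul hc.ne' (by positivity),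
      Real.log_pow, hRdef, Real.log_pow,
      Real.log_div (Real.exp_ne_zero _) (by positivity), Real.log_exp, Real.log_pow]
    push_cast
    ring
  show |(μ - 2 * Real.log (1 + c * A ^ 2)) - _| ≤ _
  rw [hEq, abs_mul]
  have : |(-2 : ℝ)| = 2 := by norm_num
  rw [this]
  calc 2 * |Real.log t| ≤ 2 * ((16/9) * ((1/(4*c) + 3) / R)) := by linarith
  _ = 32/9 * (1/(4*c) + 3) / R := by ring
end

section
/- Suppose g ∈ C²((0,R)) ∩ C¹([0,R)) satisfies g'' + (1/r)g' + h e^{U_h(r)} g = E(r) on (0,R) with g(0) = g'(0) = 0, where h ∈ [1/2, 2], U_h(r) = log(1/(1+hr²/8)²), and |E(r)| ≤ ε(1+r)^{-3}. Then there is an absolute constant C such that |g(r)| ≤ C ε log(2+r) for all r ∈ (0,R). -/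
noncomputable def phi (a r : ℝ) : ℝ := (1 - a*r^2)/(1 + a*r^2)
noncomputable def phi' (a r : ℝ) : ℝ := -4*a*r/(1 + a*r^2)^2
noncomputable def psi (a r : ℝ) : ℝ := phi a r * (Real.log r + 1) + 1
noncomputable def psi' (a r : ℝ) : ℝ := phi' a r * (Real.log r + 1) + phi a r / r
noncomputable def cc (a r : ℝ) : ℝ := 8*a/(1 + a*r^2)^2

variable {a r : ℝ}

lemma denom_pos (ha : 0 < a) (r : ℝ) : 0 < 1 + a*r^2 := by positivity

lemma hasDerivAt_phi (ha : 0 < a) (r : ℝ) : HasDerivAt (phi a) (phi' a r) r := by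
  have h1 : HasDerivAt (fun r : ℝ => 1 - a*r^2) (-(a*(2*r))) r := by
    simpa using ((hasDerivAt_pow 2 r).const_mul a).const_sub 1
  have h2 : HasDerivAt (fun r : ℝ => 1 + a*r^2) (a*(2*r)) r := by
    simpa using ((hasDerivAt_pow 2 r).const_mul a).const_add 1
  have := h1.div h2 (denom_pos ha r).ne'
  refine this.congr_deriv (Eq.symm ?_)
  have := (denom_pos ha r).ne'
  simp only [phi']
  field_simp
  ring

lemma hasDerivAt_phi' (ha : 0 < a) (hr : r ≠ 0) :
    HasDerivAt (phi' a) (-(phi' a r)/r - cc a r * phi a r) r := by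
  have h2 : HasDerivAt (fun r : ℝ => (1 + a*r^2)^2) (2*(1+a*r^2)*(a*(2*r))) r := by
    have h0 : HasDerivAt (fun r : ℝ => 1 + a*r^2) (a*(2*r)) r := by
      simpa using ((hasDerivAt_pow 2 r).const_mul a).const_add 1
    simpa [mul_comm] using (h0.fun_pow 2)
  have h1 : HasDerivAt (fun r : ℝ => -4*a*r) (-4*a) r := by
    simpa using (hasDerivAt_id r).const_mul (-4*a)
  have := h1.div h2 (by positivity : (0:ℝ) < (1+a*r^2)^2).ne'
  refine this.congr_deriv (Eq.symm ?_)
  have h3 := (denom_pos ha r).ne'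
  simp only [phi', cc, phi]
  field_simp
  ring

lemma hasDerivAt_psi (ha : 0 < a) (hr : 0 < r) : HasDerivAt (psi a) (psi' a r) r := by
  have hl : HasDerivAt (fun r : ℝ => Real.log r + 1) (1/r) r := by
    simpa using (Real.hasDerivAt_log hr.ne').add_const 1
  have := ((hasDerivAt_phi ha r).mul hl).add_const 1
  refine this.congr_deriv (Eq.symm ?_)
  unfold psi'
  field_simp

lemma hasDerivAt_psi' (ha : 0 < a) (hr : 0 < r) :
    HasDerivAt (psi' a) (-(psi' a r)/r - cc a r * psi a r) r := by
  have hl : HasDerivAt (fun r : ℝ => Real.log r + 1) (1/r) r := by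
    simpa using (Real.hasDerivAt_log hr.ne').add_const 1
  have h1 := (hasDerivAt_phi' ha hr.ne').mul hl
  have h2 := (hasDerivAt_phi ha r).div (hasDerivAt_id r) hr.ne'
  have := h1.add h2
  refine this.congr_deriv (Eq.symm ?_)
  have h3 := (denom_pos ha r).ne'
  have hr' := hr.ne'
  unfold psi' psi phi phi' cc
  simp only [id_eq]
  field_simp
  ring

lemma wronskian (ha : 0 < a) (hr : 0 < r) :
    r * (phi a r * psi' a r - psi a r * phi' a r) = 1 := by
  have h3 := (denom_pos ha r).ne'
  unfold psi' psi phi phi'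
  field_simp
  ring

lemma abs_phi_le (ha : 0 < a) (r : ℝ) : |phi a r| ≤ 1 := by
  unfold phi
  rw [abs_div, abs_of_pos (denom_pos ha r), div_le_one (denom_pos ha r), abs_le]
  have : 0 ≤ a * r^2 := by positivity
  constructor <;> nlinarith

lemma abs_psi_le (ha : 0 < a) (r : ℝ) : |psi a r| ≤ |Real.log r| + 2 := by
  unfold psi
  calc |phi a r * (Real.log r + 1) + 1| ≤ |phi a r * (Real.log r + 1)| + 1 := by
        simpa using abs_add_le (phi a r * (Real.log r + 1)) 1
    _ = |phi a r| * |Real.log r + 1| + 1 := by rw [abs_mul]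
    _ ≤ 1 * (|Real.log r| + 1) + 1 := by
        gcongr
        · exact abs_phi_le ha r
        · simpa using abs_add_le (Real.log r) 1
    _ = |Real.log r| + 2 := by ring

lemma mul_neg_log_le {s : ℝ} (h0 : 0 < s) (h1 : s ≤ 1) : s * (-Real.log s) ≤ 1 - s := by
  have h := Real.log_le_sub_one_of_pos (inv_pos.2 h0)
  rw [Real.log_inv] at h
  have h2 : s * (-Real.log s) ≤ s * (s⁻¹ - 1) := by nlinarith
  have h3 : s * (s⁻¹ - 1) = 1 - s := by field_simp
  nlinarith

lemma const_on_Ioo {f : ℝ → ℝ} {p q x y : ℝ} (hf : ∀ t ∈ Set.Ioo p q, HasDerivAt f 0 t)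
    (hx : x ∈ Set.Ioo p q) (hy : y ∈ Set.Ioo p q) : f x = f y := by
  apply (convex_Ioo p q).is_const_of_fderivWithin_eq_zero
    (fun t ht => (hf t ht).differentiableAt.differentiableWithinAt) _ hx hy
  intro t ht
  rw [fderivWithin_of_isOpen isOpen_Ioo ht, (hf t ht).hasFDerivAt.fderiv]
  ext z
  simp

set_option maxHeartbeats 1000000 in
open MeasureTheory intervalIntegral in
theorem stmt19 :
    ∃ C : ℝ, 0 < C ∧
      ∀ (h R ε : ℝ) (g E : ℝ → ℝ),
        1 / 2 ≤ h → h ≤ 2 → 1 < R → 0 < ε →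
        ContDiffOn ℝ 2 g (Set.Ioo 0 R) →
        ContDiffOn ℝ 1 g (Set.Ico 0 R) →
        g 0 = 0 → deriv g 0 = 0 →
        (∀ r ∈ Set.Ioo (0:ℝ) R,
          deriv (deriv g) r + (1 / r) * deriv g r
            + h * Real.exp (Real.log (1 / (1 + h * r ^ 2 / 8) ^ 2)) * g r = E r) →
        (∀ r ∈ Set.Ioo (0:ℝ) R, |E r| ≤ ε * (1 + r) ^ (-3 : ℤ)) →
        ∀ r ∈ Set.Ioo (0:ℝ) R, |g r| ≤ C * ε * Real.log (2 + r) := by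
  refine ⟨11, by norm_num, ?_⟩
  intro h R ε g E h1 h2 hR hε hg2 hg1 hg0 _hg0' hode hEb
  have hh : 0 < h := lt_of_lt_of_le (by norm_num) h1
  set a : ℝ := h / 8 with ha_def
  have ha : 0 < a := by positivity
  set S := Set.Ioo (0:ℝ) R with hS_def
  have hSopen : IsOpen S := isOpen_Ioo
  -- coefficient rewriting
  have hcc : ∀ r : ℝ, h * Real.exp (Real.log (1 / (1 + h * r ^ 2 / 8) ^ 2)) = cc a r := by
    intro r
    have hpos : (0:ℝ) < 1 + h * r^2/8 := by positivity
    rw [Real.exp_log (by positivity)]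
    unfold cc
    rw [ha_def]
    field_simp
  -- derivatives of g
  have hgd : ∀ r ∈ S, HasDerivAt g (deriv g r) r := fun r hr =>
    ((hg2.differentiableOn (by norm_num)).differentiableAt (hSopen.mem_nhds hr)).hasDerivAt
  have hg2' : ContDiffOn ℝ 1 (deriv g) S := hg2.deriv_of_isOpen hSopen (by norm_num)
  have hgdd : ∀ r ∈ S, HasDerivAt (deriv g) (deriv (deriv g) r) r := fun r hr =>
    ((hg2'.differentiableOn one_ne_zero).differentiableAt (hSopen.mem_nhds hr)).hasDerivAt
  have hgddc : ContinuousOn (deriv (deriv g)) S := hg2'.continuousOn_deriv_of_isOpen hSopen le_rfl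
  have hgc : ContinuousOn g S := hg2.continuousOn
  have hgdc : ContinuousOn (deriv g) S := hg2'.continuousOn
  have hODE : ∀ r ∈ S, deriv (deriv g) r = E r - (1/r) * deriv g r - cc a r * g r := by
    intro r hr
    have := hode r hr
    rw [hcc] at this
    linarith
  -- continuity of E
  have hccC : Continuous (cc a) := by
    apply continuous_const.div (by continuity)
    intro r
    positivity
  have hEc : ContinuousOn E S := by
    have hc : ContinuousOn (fun r => deriv (deriv g) r + (1/r) * deriv g r + cc a r * g r) S :=
      (hgddc.add (((continuousOn_const.div continuousOn_id
        (fun r hr => ne_of_gt hr.1))).mul hgdc)).add (hccC.continuousOn.mul hgc)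
    apply hc.congr
    intro r hr
    have := hode r hr
    rw [hcc] at this
    exact this.symm
  -- bound |E| ≤ ε on S
  have hz : ∀ s : ℝ, ((1+s):ℝ)^(-3:ℤ) = ((1+s)^3)⁻¹ := fun s => by
    rw [zpow_neg]
    norm_cast
  have hEb' : ∀ s ∈ S, |E s| ≤ ε := by
    intro s hs
    have h3 : (1:ℝ) ≤ (1+s)^3 := one_le_pow₀ (by linarith [hs.1])
    have hb := hEb s hs
    rw [hz s] at hb
    have hinv : ((1+s)^3)⁻¹ ≤ 1 := inv_le_one_of_one_le₀ h3
    calc |E s| ≤ ε * ((1+s)^3)⁻¹ := hb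
      _ ≤ ε * 1 := by gcongr
      _ = ε := mul_one ε
  -- integrands
  set fP : ℝ → ℝ := fun s => s * phi a s * E s with hfP_def
  set fQ : ℝ → ℝ := fun s => s * psi a s * E s with hfQ_def
  have hphiC : Continuous (phi a) := by
    unfold phi
    exact Continuous.div (continuous_const.sub (continuous_const.mul (continuous_pow 2)))
      (continuous_const.add (continuous_const.mul (continuous_pow 2)))
      (fun r => (denom_pos ha r).ne')
  have hpsiC : ContinuousOn (psi a) S := by
    apply ContinuousOn.add _ continuousOn_const
    apply ContinuousOn.mul hphiC.continuousOn
    apply ContinuousOn.add _ continuousOn_const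
    exact Real.continuousOn_log.mono (fun s hs => by simpa using (ne_of_gt hs.1))
  have hfPc : ContinuousOn fP S :=
    ((continuousOn_id.mul hphiC.continuousOn).mul hEc)
  have hfQc : ContinuousOn fQ S :=
    ((continuousOn_id.mul hpsiC).mul hEc)
  -- pointwise bounds for integrands
  have hfPb : ∀ s ∈ S, |fP s| ≤ R * ε := by
    intro s hs
    rw [hfP_def, abs_mul, abs_mul]
    have hsR : |s| ≤ R := by rw [abs_of_pos hs.1]; exact hs.2.le
    calc |s| * |phi a s| * |E s| ≤ R * 1 * ε :=
          mul_le_mul (mul_le_mul hsR (abs_phi_le ha s) (abs_nonneg _) (by linarith))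
            (hEb' s hs) (abs_nonneg _) (by linarith)
      _ = R * ε := by ring
  have hslog : ∀ s ∈ S, |s| * |Real.log s| ≤ R * R + 1 := by
    intro s hs
    rw [abs_of_pos hs.1]
    rcases le_or_gt s 1 with hs1 | hs1
    · have := mul_neg_log_le hs.1 hs1
      rw [abs_of_nonpos (Real.log_nonpos hs.1.le hs1)]
      nlinarith [this, hs.1.le, mul_pos (lt_trans one_pos hR) (lt_trans one_pos hR)]
    · rw [abs_of_nonneg (Real.log_nonneg hs1.le)]
      have hls := Real.log_le_sub_one_of_pos (lt_trans one_pos hs1)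
      nlinarith [hs.2, hs.1]
  have hfQb : ∀ s ∈ S, |fQ s| ≤ (R * R + 1 + 2 * R) * ε := by
    intro s hs
    rw [hfQ_def, abs_mul, abs_mul]
    have hsR : |s| ≤ R := by rw [abs_of_pos hs.1]; exact hs.2.le
    calc |s| * |psi a s| * |E s| ≤ |s| * (|Real.log s| + 2) * ε :=
          mul_le_mul (mul_le_mul le_rfl (abs_psi_le ha s) (abs_nonneg _) (abs_nonneg _))
            (hEb' s hs) (abs_nonneg _) (by positivity)
      _ = (|s| * |Real.log s| + 2 * |s|) * ε := by ring
      _ ≤ (R * R + 1 + 2 * R) * ε := by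
          apply mul_le_mul_of_nonneg_right _ hε.le
          have := hslog s hs
          linarith
  -- integrability
  have hInt : ∀ (f : ℝ → ℝ) (M : ℝ), ContinuousOn f S → (∀ s ∈ S, |f s| ≤ M) →
      ∀ t, t ∈ S → IntervalIntegrable f volume 0 t := by
    intro f M hc hb t ht
    rw [intervalIntegrable_iff_integrableOn_Ioo_of_le ht.1.le]
    have hsub : Set.Ioo (0:ℝ) t ⊆ S := Set.Ioo_subset_Ioo le_rfl ht.2.le
    refine ⟨(hc.mono hsub).aestronglyMeasurable measurableSet_Ioo,
      HasFiniteIntegral.restrict_of_bounded (C := M) measure_Ioo_lt_top ?_⟩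
    exact (ae_restrict_iff' measurableSet_Ioo).2 (Filter.Eventually.of_forall
        (fun s hs => by rw [Real.norm_eq_abs]; exact hb s (hsub hs)))
  have hPInt : ∀ t ∈ S, IntervalIntegrable fP volume 0 t := hInt fP (R*ε) hfPc hfPb
  have hQInt : ∀ t ∈ S, IntervalIntegrable fQ volume 0 t :=
    hInt fQ ((R * R + 1 + 2 * R) * ε) hfQc hfQb
  -- the particular solution
  set P : ℝ → ℝ := fun t => ∫ s in (0:ℝ)..t, fP s with hP_def
  set Q : ℝ → ℝ := fun t => ∫ s in (0:ℝ)..t, fQ s with hQ_def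
  have hPd : ∀ r ∈ S, HasDerivAt P (fP r) r := fun r hr =>
    intervalIntegral.integral_hasDerivAt_right (hPInt r hr)
      (hfPc.stronglyMeasurableAtFilter hSopen r hr)
      (hfPc.continuousAt (hSopen.mem_nhds hr))
  have hQd : ∀ r ∈ S, HasDerivAt Q (fQ r) r := fun r hr =>
    intervalIntegral.integral_hasDerivAt_right (hQInt r hr)
      (hfQc.stronglyMeasurableAtFilter hSopen r hr)
      (hfQc.continuousAt (hSopen.mem_nhds hr))
  set gp : ℝ → ℝ := fun t => psi a t * P t - phi a t * Q t with hgp_def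
  set gp' : ℝ → ℝ := fun t => psi' a t * P t - phi' a t * Q t with hgp'_def
  have hgpd : ∀ r ∈ S, HasDerivAt gp (gp' r) r := by
    intro r hr
    have h1 := ((hasDerivAt_psi ha hr.1).mul (hPd r hr)).sub
      ((hasDerivAt_phi ha r).mul (hQd r hr))
    refine h1.congr_deriv (Eq.symm ?_)
    simp only [hgp'_def, hfP_def, hfQ_def]
    ring
  have hgpdd : ∀ r ∈ S, HasDerivAt gp' (E r - (1/r) * gp' r - cc a r * gp r) r := by
    intro r hr
    have h1 := ((hasDerivAt_psi' ha hr.1).mul (hPd r hr)).sub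
      ((hasDerivAt_phi' ha hr.1.ne').mul (hQd r hr))
    refine h1.congr_deriv (Eq.symm ?_)
    have hw := wronskian ha hr.1
    simp only [hgp'_def, hgp_def, hfP_def, hfQ_def]
    linear_combination (-(E r)) * hw
  -- w = g - gp solves the homogeneous equation
  set w : ℝ → ℝ := fun t => g t - gp t with hw_def
  set w' : ℝ → ℝ := fun t => deriv g t - gp' t with hw'_def
  have hwd : ∀ r ∈ S, HasDerivAt w (w' r) r := fun r hr => (hgd r hr).sub (hgpd r hr)
  have hwdd : ∀ r ∈ S, HasDerivAt w' (-(w' r)/r - cc a r * w r) r := by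
    intro r hr
    have hd1 := (hgdd r hr).sub (hgpdd r hr)
    rw [hODE r hr] at hd1
    refine hd1.congr_deriv (Eq.symm ?_)
    simp only [hw_def, hw'_def]
    ring
  set A : ℝ → ℝ := fun t => t * (psi' a t * w t - psi a t * w' t) with hA_def
  set B : ℝ → ℝ := fun t => t * (phi a t * w' t - phi' a t * w t) with hB_def
  have hAd : ∀ r ∈ S, HasDerivAt A 0 r := by
    intro r hr
    have hF := ((hasDerivAt_psi' ha hr.1).mul (hwd r hr)).sub
      ((hasDerivAt_psi ha hr.1).mul (hwdd r hr))
    have hd1 := (hasDerivAt_id r).mul hF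
    refine hd1.congr_deriv (Eq.symm ?_)
    have hrne := hr.1.ne'
    simp only [id_eq, Pi.mul_apply, Pi.sub_apply]
    field_simp
    ring
  have hBd : ∀ r ∈ S, HasDerivAt B 0 r := by
    intro r hr
    have hF := ((hasDerivAt_phi ha r).mul (hwdd r hr)).sub
      ((hasDerivAt_phi' ha hr.1.ne').mul (hwd r hr))
    have hd1 := (hasDerivAt_id r).mul hF
    refine hd1.congr_deriv (Eq.symm ?_)
    have hrne := hr.1.ne'
    simp only [id_eq, Pi.mul_apply, Pi.sub_apply]
    field_simp
    ring
  have hhalf : (1/2 : ℝ) ∈ S := by constructor <;> [norm_num; linarith]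
  set α := A (1/2) with hα_def
  set β := B (1/2) with hβ_def
  have hAconst : ∀ r ∈ S, A r = α := fun r hr => const_on_Ioo hAd hr hhalf
  have hBconst : ∀ r ∈ S, B r = β := fun r hr => const_on_Ioo hBd hr hhalf
  have hrep : ∀ r ∈ S, w r = α * phi a r + β * psi a r := by
    intro r hr
    have hwr := wronskian ha hr.1
    rw [← hAconst r hr, ← hBconst r hr]
    simp only [hA_def, hB_def]
    linear_combination (-(w r)) * hwr
  -- limits as r → 0⁺
  set l : Filter ℝ := nhdsWithin 0 S with hl_def
  have hlne : l.NeBot := by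
    apply mem_closure_iff_nhdsWithin_neBot.1
    rw [hS_def, closure_Ioo (by linarith : (0:ℝ) ≠ R)]
    exact ⟨le_rfl, by linarith⟩
  have hle : l ≤ nhds 0 := nhdsWithin_le_nhds
  have hmem : ∀ᶠ t in l, t ∈ S := self_mem_nhdsWithin
  have hgt : Filter.Tendsto g l (nhds 0) := by
    have hc := hg1.continuousOn.continuousWithinAt (⟨le_rfl, by linarith⟩ : (0:ℝ) ∈ Set.Ico 0 R)
    rw [ContinuousWithinAt, hg0] at hc
    exact hc.mono_left (nhdsWithin_mono 0 (fun x hx => ⟨hx.1.le, hx.2⟩))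
  -- bound for gp near 0
  have hPsmall : ∀ t ∈ S, t ≤ 1 → |P t| ≤ ε * t^2 := by
    intro t ht ht1
    have := intervalIntegral.norm_integral_le_of_norm_le_const (C := ε * t) (f := fP)
      (a := 0) (b := t) ?_
    · rw [Real.norm_eq_abs] at this
      calc |P t| ≤ ε * t * |t - 0| := this
        _ = ε * t^2 := by rw [sub_zero, abs_of_pos ht.1]; ring
    · intro s hs
      rw [Set.uIoc_of_le ht.1.le] at hs
      have hsS : s ∈ S := ⟨hs.1, lt_of_le_of_lt hs.2 ht.2⟩
      rw [Real.norm_eq_abs, hfP_def, abs_mul, abs_mul]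
      calc |s| * |phi a s| * |E s| ≤ t * 1 * ε :=
            mul_le_mul (mul_le_mul (by rw [abs_of_pos hs.1]; exact hs.2)
              (abs_phi_le ha s) (abs_nonneg _) (by linarith [hs.1, hs.2]))
              (hEb' s hsS) (abs_nonneg _) (by nlinarith [hs.1, hs.2])
        _ = ε * t := by ring
  have hQsmall : ∀ t ∈ S, t ≤ 1 → |Q t| ≤ 3 * ε * t := by
    intro t ht ht1
    have := intervalIntegral.norm_integral_le_of_norm_le_const (C := 3 * ε) (f := fQ)
      (a := 0) (b := t) ?_
    · rw [Real.norm_eq_abs] at this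
      calc |Q t| ≤ 3 * ε * |t - 0| := this
        _ = 3 * ε * t := by rw [sub_zero, abs_of_pos ht.1]
    · intro s hs
      rw [Set.uIoc_of_le ht.1.le] at hs
      have hsS : s ∈ S := ⟨hs.1, lt_of_le_of_lt hs.2 ht.2⟩
      have hs1 : s ≤ 1 := hs.2.trans ht1
      have hlog : |Real.log s| = -Real.log s := abs_of_nonpos (Real.log_nonpos hs.1.le hs1)
      have hkey := mul_neg_log_le hs.1 hs1
      rw [Real.norm_eq_abs, hfQ_def, abs_mul, abs_mul]
      calc |s| * |psi a s| * |E s| ≤ |s| * (|Real.log s| + 2) * ε :=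
            mul_le_mul (mul_le_mul le_rfl (abs_psi_le ha s) (abs_nonneg _) (abs_nonneg _))
              (hEb' s hsS) (abs_nonneg _) (by positivity)
        _ ≤ 3 * ε := by
            rw [abs_of_pos hs.1, hlog]
            nlinarith [hs.1.le, hs.2, hε.le]
  have hgpt : Filter.Tendsto gp l (nhds 0) := by
    apply squeeze_zero_norm' (a := fun t => 6 * ε * t)
    · filter_upwards [hmem, hle (eventually_le_nhds (by norm_num : (0:ℝ) < 1))] with t ht ht1
      have hP := hPsmall t ht ht1
      have hQ := hQsmall t ht ht1
      have hpsi := abs_psi_le ha t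
      have hlogt : |Real.log t| = -Real.log t := abs_of_nonpos (Real.log_nonpos ht.1.le ht1)
      have hkey := mul_neg_log_le ht.1 ht1
      rw [Real.norm_eq_abs, hgp_def]
      calc |psi a t * P t - phi a t * Q t| ≤ |psi a t| * |P t| + |phi a t| * |Q t| := by
            rw [← abs_mul, ← abs_mul]; exact abs_sub _ _
        _ ≤ (|Real.log t| + 2) * (ε * t^2) + 1 * (3 * ε * t) := by
            apply add_le_add
            · exact mul_le_mul hpsi hP (abs_nonneg _) (by positivity)
            · exact mul_le_mul (abs_phi_le ha t) hQ (abs_nonneg _) one_pos.le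
        _ ≤ 6 * ε * t := by
            rw [hlogt]
            have k1 : ε * t * (t * -Real.log t) ≤ ε * t * (1 - t) :=
              mul_le_mul_of_nonneg_left hkey (mul_nonneg hε.le ht.1.le)
            have k2 : ε * (t * t) ≤ ε * (t * 1) := by
              apply mul_le_mul_of_nonneg_left _ hε.le
              nlinarith [ht.1.le]
            nlinarith [k1, k2]
    · have : Filter.Tendsto (fun t : ℝ => 6 * ε * t) (nhds 0) (nhds (6 * ε * 0)) :=
        (continuous_const.mul continuous_id).tendsto 0
      rw [mul_zero] at this
      exact this.mono_left hle
  have hwt : Filter.Tendsto w l (nhds 0) := by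
    have := hgt.sub hgpt
    rw [sub_zero] at this
    exact this
  have hlogbot : Filter.Tendsto Real.log l Filter.atBot :=
    Real.tendsto_log_nhdsGT_zero.mono_left
      (nhdsWithin_mono 0 (fun x hx => hx.1))
  have hloginv : Filter.Tendsto (fun t => (Real.log t)⁻¹) l (nhds 0) := by
    have h1 : Filter.Tendsto (fun t => -Real.log t) l Filter.atTop :=
      Filter.tendsto_neg_atBot_atTop.comp hlogbot
    have h2 : Filter.Tendsto (fun t => (-Real.log t)⁻¹) l (nhds 0) := h1.inv_tendsto_atTop
    have h3 := h2.neg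
    rw [neg_zero] at h3
    convert h3 using 2 with t
    rw [inv_neg, neg_neg]
  have hphit : Filter.Tendsto (fun t => phi a t) l (nhds 1) := by
    have := (hphiC.tendsto 0).mono_left hle
    have h0 : phi a 0 = 1 := by unfold phi; norm_num
    rwa [h0] at this
  have hβ0 : β = 0 := by
    have hT1 : Filter.Tendsto (fun t => w t * (Real.log t)⁻¹) l (nhds 0) := by
      have := hwt.mul hloginv
      rwa [mul_zero] at this
    have hT2 : Filter.Tendsto (fun t => w t * (Real.log t)⁻¹) l (nhds β) := by
      have heq : ∀ᶠ t in l, α * phi a t * (Real.log t)⁻¹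
          + β * (phi a t + phi a t * (Real.log t)⁻¹ + (Real.log t)⁻¹)
          = w t * (Real.log t)⁻¹ := by
        filter_upwards [hmem, hlogbot.eventually (Filter.eventually_lt_atBot (0:ℝ))]
          with t ht hlt
        have hne : Real.log t ≠ 0 := ne_of_lt hlt
        have key : ∀ x y L p : ℝ, L ≠ 0 → x * p * L⁻¹ + y * (p + p * L⁻¹ + L⁻¹)
            = (x * p + y * (p * (L + 1) + 1)) * L⁻¹ := by
          intro x y L p hL
          field_simp
        rw [hrep t ht]
        unfold psi
        exact key α β (Real.log t) (phi a t) hne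
      have hlim : Filter.Tendsto (fun t => α * phi a t * (Real.log t)⁻¹
          + β * (phi a t + phi a t * (Real.log t)⁻¹ + (Real.log t)⁻¹)) l
          (nhds (α * 1 * 0 + β * (1 + 1 * 0 + 0))) :=
        ((Filter.Tendsto.const_mul α hphit).mul hloginv).add
          (Filter.Tendsto.const_mul β ((hphit.add (hphit.mul hloginv)).add hloginv))
      rw [show α * 1 * 0 + β * (1 + 1 * 0 + 0) = β by ring] at hlim
      exact Filter.Tendsto.congr' heq hlim
    exact (tendsto_nhds_unique hT2 hT1)
  have hα0 : α = 0 := by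
    have hT2 : Filter.Tendsto w l (nhds α) := by
      have heq : ∀ᶠ t in l, α * phi a t = w t := by
        filter_upwards [hmem] with t ht
        rw [hrep t ht, hβ0]
        ring
      have hlim : Filter.Tendsto (fun t => α * phi a t) l (nhds (α * 1)) :=
        Filter.Tendsto.const_mul α hphit
      rw [mul_one] at hlim
      exact Filter.Tendsto.congr' heq hlim
    exact tendsto_nhds_unique hT2 hwt
  have hgeq : ∀ r ∈ S, g r = gp r := by
    intro r hr
    have := hrep r hr
    rw [hα0, hβ0] at this
    simp only [hw_def] at this
    linarith [this]
  -- quantitative estimate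
  have hI2 : ∀ t : ℝ, 0 < t → (∫ s in (0:ℝ)..t, ((1+s)^2)⁻¹) ≤ 1 := by
    intro t ht
    have hder : ∀ s ∈ Set.uIcc (0:ℝ) t, HasDerivAt (fun u : ℝ => -(1+u)⁻¹) (((1+s)^2)⁻¹) s := by
      intro s hs
      rw [Set.uIcc_of_le ht.le] at hs
      have hne : (1 + s) ≠ 0 := by nlinarith [hs.1]
      have h0 : HasDerivAt (fun u : ℝ => 1 + u) 1 s := (hasDerivAt_id s).const_add 1
      have hd1 := (h0.inv hne).neg
      refine hd1.congr_deriv (Eq.symm ?_)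
      field_simp
    have hint : IntervalIntegrable (fun s : ℝ => ((1+s)^2)⁻¹) volume 0 t := by
      apply ContinuousOn.intervalIntegrable
      apply ContinuousOn.inv₀ (by fun_prop)
      intro s hs
      rw [Set.uIcc_of_le ht.le] at hs
      nlinarith [hs.1]
    rw [intervalIntegral.integral_eq_sub_of_hasDerivAt hder hint]
    have hpos : (0:ℝ) < 1 + t := by linarith
    have h2 : (0:ℝ) ≤ (1+t)⁻¹ := by positivity
    norm_num
    linarith
  have hcomp : ∀ (f : ℝ → ℝ) (M : ℝ) (t : ℝ), t ∈ S → IntervalIntegrable f volume 0 t →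
      0 ≤ M → (∀ s ∈ Set.Icc (0:ℝ) t, |f s| ≤ M * ((1+s)^2)⁻¹) →
      |∫ s in (0:ℝ)..t, f s| ≤ M := by
    intro f M t ht hint hM hb
    have habs : IntervalIntegrable (fun s => |f s|) volume 0 t := hint.abs
    have hbint : IntervalIntegrable (fun s : ℝ => M * ((1+s)^2)⁻¹) volume 0 t := by
      apply ContinuousOn.intervalIntegrable
      apply ContinuousOn.mul continuousOn_const
      apply ContinuousOn.inv₀ (by fun_prop)
      intro s hs
      rw [Set.uIcc_of_le ht.1.le] at hs
      nlinarith [hs.1]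
    calc |∫ s in (0:ℝ)..t, f s| ≤ ∫ s in (0:ℝ)..t, |f s| :=
          intervalIntegral.abs_integral_le_integral_abs ht.1.le
      _ ≤ ∫ s in (0:ℝ)..t, M * ((1+s)^2)⁻¹ :=
          intervalIntegral.integral_mono_on ht.1.le habs hbint hb
      _ = M * ∫ s in (0:ℝ)..t, ((1+s)^2)⁻¹ := intervalIntegral.integral_const_mul _ _
      _ ≤ M * 1 := mul_le_mul_of_nonneg_left (hI2 t ht.1) hM
      _ = M := mul_one M
  intro r hr
  have hL0 : (0:ℝ) ≤ Real.log (2 + r) := Real.log_nonneg (by linarith [hr.1])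
  set L := Real.log (2 + r) with hL_def
  have hPb : |P r| ≤ ε := by
    apply hcomp fP ε r hr (hPInt r hr) hε.le
    intro s hs
    rcases eq_or_lt_of_le hs.1 with hs0 | hs0
    · rw [hfP_def]
      simp only [← hs0]
      norm_num
      positivity
    · have hsS : s ∈ S := ⟨hs0, lt_of_le_of_lt hs.2 hr.2⟩
      have hE3 := hEb s hsS
      rw [hz s] at hE3
      have key : s * ((1+s)^3)⁻¹ ≤ ((1+s)^2)⁻¹ := by
        rw [← div_eq_mul_inv, inv_eq_one_div,
          div_le_div_iff₀ (by positivity) (by positivity)]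
        nlinarith [hs0.le, sq_nonneg (1+s)]
      rw [hfP_def, abs_mul, abs_mul, abs_of_pos hs0]
      calc s * |phi a s| * |E s| ≤ s * 1 * (ε * ((1+s)^3)⁻¹) :=
            mul_le_mul (mul_le_mul le_rfl (abs_phi_le ha s) (abs_nonneg _) hs0.le)
              hE3 (abs_nonneg _) (by nlinarith [hs0.le])
        _ = ε * (s * ((1+s)^3)⁻¹) := by ring
        _ ≤ ε * ((1+s)^2)⁻¹ := mul_le_mul_of_nonneg_left key hε.le
  have hQb : |Q r| ≤ ε * (3 + 2*L) := by
    have hM : (0:ℝ) ≤ ε * (3 + 2*L) := by positivity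
    apply hcomp fQ (ε * (3 + 2*L)) r hr (hQInt r hr) hM
    intro s hs
    rcases eq_or_lt_of_le hs.1 with hs0 | hs0
    · rw [hfQ_def]
      simp only [← hs0]
      norm_num
      positivity
    · have hsS : s ∈ S := ⟨hs0, lt_of_le_of_lt hs.2 hr.2⟩
      have hE3 := hEb s hsS
      rw [hz s] at hE3
      have hlogb : s * |Real.log s| ≤ (1 + L) * (1 + s) := by
        rcases le_or_gt s 1 with hs1 | hs1
        · have hk := mul_neg_log_le hs0 hs1
          rw [abs_of_nonpos (Real.log_nonpos hs0.le hs1)]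
          nlinarith [hL0, hs0.le]
        · rw [abs_of_nonneg (Real.log_nonneg hs1.le)]
          have hlogle : Real.log s ≤ L := by
            rw [hL_def]
            apply Real.log_le_log hs0
            linarith [hs.2, hr.2.le]
          nlinarith [hL0, hs0.le, Real.log_nonneg hs1.le]
      have key : s * (|Real.log s| + 2) * ((1+s)^3)⁻¹ ≤ (3 + 2*L) * ((1+s)^2)⁻¹ := by
        rw [← div_eq_mul_inv, ← div_eq_mul_inv,
          div_le_div_iff₀ (by positivity) (by positivity)]
        have hexp : (0:ℝ) ≤ (1+s)^2 := sq_nonneg _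
        nlinarith [mul_le_mul_of_nonneg_right hlogb hexp, hs0.le, hL0,
          mul_nonneg hL0 (by positivity : (0:ℝ) ≤ (1+s)^3), sq_nonneg (1+s)]
      rw [hfQ_def, abs_mul, abs_mul, abs_of_pos hs0]
      calc s * |psi a s| * |E s| ≤ s * (|Real.log s| + 2) * (ε * ((1+s)^3)⁻¹) :=
            mul_le_mul (mul_le_mul le_rfl (abs_psi_le ha s) (abs_nonneg _) hs0.le)
              hE3 (abs_nonneg _) (by positivity)
        _ = ε * (s * (|Real.log s| + 2) * ((1+s)^3)⁻¹) := by ring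
        _ ≤ ε * ((3 + 2*L) * ((1+s)^2)⁻¹) := mul_le_mul_of_nonneg_left key hε.le
        _ = ε * (3 + 2*L) * ((1+s)^2)⁻¹ := by ring
  have hpsiPb : |psi a r| * |P r| ≤ ε * (2 + L) := by
    rcases le_or_gt r 1 with hr1 | hr1
    · have hP := hPsmall r hr hr1
      have hpsi := abs_psi_le ha r
      rw [abs_of_nonpos (Real.log_nonpos hr.1.le hr1)] at hpsi
      have hk := mul_neg_log_le hr.1 hr1
      have hstep : |psi a r| * |P r| ≤ (-Real.log r + 2) * (ε * r^2) :=
        mul_le_mul hpsi hP (abs_nonneg _) (by nlinarith [Real.log_nonpos hr.1.le hr1])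
      have hstep2 : (-Real.log r + 2) * (ε * r^2) ≤ 2 * ε := by
        have k1 : ε * r * (r * -Real.log r) ≤ ε * r * (1 - r) :=
          mul_le_mul_of_nonneg_left hk (mul_nonneg hε.le hr.1.le)
        have k2 : ε * (r * r) ≤ ε * (r * 1) := by
          apply mul_le_mul_of_nonneg_left _ hε.le
          nlinarith [hr.1.le]
        have k3 : ε * r ≤ ε * 1 := mul_le_mul_of_nonneg_left hr1 hε.le
        nlinarith [k1, k2, k3]
      calc |psi a r| * |P r| ≤ 2 * ε := hstep.trans hstep2
        _ ≤ ε * (2 + L) := by nlinarith [mul_nonneg hε.le hL0]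
    · have hpsi := abs_psi_le ha r
      rw [abs_of_nonneg (Real.log_nonneg hr1.le)] at hpsi
      have hlogle : Real.log r ≤ L := by
        rw [hL_def]
        apply Real.log_le_log hr.1
        linarith
      calc |psi a r| * |P r| ≤ (L + 2) * ε :=
            mul_le_mul (by linarith) hPb (abs_nonneg _) (by linarith)
        _ = ε * (2 + L) := by ring
  have hL2 : (5:ℝ)/8 ≤ L := by
    have hlog2 : (0.6931471803:ℝ) < Real.log 2 := Real.log_two_gt_d9
    have : Real.log 2 ≤ L := by
      rw [hL_def]
      apply Real.log_le_log two_pos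
      linarith [hr.1]
    linarith
  calc |g r| = |gp r| := by rw [hgeq r hr]
    _ = |psi a r * P r - phi a r * Q r| := by rw [hgp_def]
    _ ≤ |psi a r| * |P r| + |phi a r| * |Q r| := by
        rw [← abs_mul, ← abs_mul]
        exact abs_sub _ _
    _ ≤ ε * (2 + L) + 1 * (ε * (3 + 2*L)) :=
        add_le_add hpsiPb
          (mul_le_mul (abs_phi_le ha r) hQb (abs_nonneg _) one_pos.le)
    _ ≤ 11 * ε * L := by nlinarith [mul_le_mul_of_nonneg_left hL2 hε.le]
end
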